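/- arXiv:1103.2935 — 7 statements merged into one kernel-verified Lean document; each statement's English description precedes it below -/
import Mathlib

section
/- Let m, n be positive integers with 2n ≤ m, let U ⊆ ℝ^m be a nonempty open set, let V_1, …, V_n be smooth vector fields on U whose values V_1(z), …, V_n(z) are linearly independent at every z ∈ U, and suppose the span is involutive: [V_i, V_j](z) ∈ span{V_1(z), …, V_n(z)} for all z ∈ U and all i, j. Let F be a smooth vector field on U. Assume that for every nonempty open subset U' ⊆ U and every smooth map ξ : U' → ℝ^n, if [F, ξ^i V_i](z) ∈ span{V_1(z), …, V_n(z)} for all z ∈ U', then ξ is identically zero. Then the set of points z ∈ U at which the 2n vectors V_1(z), …, V_n(z), [F, V_1](z), …, [F, V_n](z) are linearly independent is an open and dense subset of U. -/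
/-- The Lie bracket of two vector fields (as maps `E → E`), defined via the
Fréchet derivative: `[X,Y](z) = DY(z)(X(z)) − DX(z)(Y(z))`. -/
noncomputable def lieB {E : Type*} [NormedAddCommGroup E] [NormedSpace ℝ E]
    (X Y : E → E) : E → E :=
  fun z => fderiv ℝ Y z (X z) - fderiv ℝ X z (Y z)

theorem lieB_contDiffOn {m : ℕ} {U : Set (Fin m → ℝ)} (hU : IsOpen U)
    {X Y : (Fin m → ℝ) → (Fin m → ℝ)}
    (hX : ContDiffOn ℝ (⊤ : ℕ∞) X U) (hY : ContDiffOn ℝ (⊤ : ℕ∞) Y U) :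
    ContDiffOn ℝ (⊤ : ℕ∞) (lieB X Y) U := by
  have htop : ((⊤ : ℕ∞) : WithTop ℕ∞) + 1 ≤ ((⊤ : ℕ∞) : WithTop ℕ∞) := by simp
  have h1 : ContDiffOn ℝ (⊤ : ℕ∞) (fun z => fderiv ℝ Y z) U := hY.fderiv_of_isOpen hU htop
  have h2 : ContDiffOn ℝ (⊤ : ℕ∞) (fun z => fderiv ℝ X z) U := hX.fderiv_of_isOpen hU htop
  exact (h1.clm_apply hX).sub (h2.clm_apply hY)

theorem lieB_sum_smul_eq {m n : ℕ}
    {F : (Fin m → ℝ) → (Fin m → ℝ)} {V : Fin n → (Fin m → ℝ) → (Fin m → ℝ)}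
    {ξ : (Fin m → ℝ) → Fin n → ℝ} {z : Fin m → ℝ}
    (hF : DifferentiableAt ℝ F z) (hV : ∀ i, DifferentiableAt ℝ (V i) z)
    (hξ : ∀ i, DifferentiableAt ℝ (fun w => ξ w i) z) :
    lieB F (fun w => ∑ i, ξ w i • V i w) z
      = ∑ i, ξ z i • lieB F (V i) z
        + ∑ i, (fderiv ℝ (fun w => ξ w i) z (F z)) • V i z := by
  have h1 : fderiv ℝ (fun w => ∑ i, ξ w i • V i w) z
      = ∑ i, fderiv ℝ (fun w => ξ w i • V i w) z :=
    fderiv_fun_sum (fun i _ => (hξ i).smul (hV i))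
  have h2 : ∀ i : Fin n, fderiv ℝ (fun w => ξ w i • V i w) z
      = ξ z i • fderiv ℝ (V i) z + (fderiv ℝ (fun w => ξ w i) z).smulRight (V i z) :=
    fun i => fderiv_smul (hξ i) (hV i)
  have key : ∀ i : Fin n,
      fderiv ℝ (fun w => ξ w i • V i w) z (F z) - fderiv ℝ F z (ξ z i • V i z)
        = ξ z i • lieB F (V i) z + (fderiv ℝ (fun w => ξ w i) z (F z)) • V i z := by
    intro i
    rw [h2 i]
    simp only [lieB, ContinuousLinearMap.add_apply, ContinuousLinearMap.smul_apply,
      ContinuousLinearMap.smulRight_apply, map_smul, smul_sub]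
    abel
  calc lieB F (fun w => ∑ i, ξ w i • V i w) z
      = ∑ i, (fderiv ℝ (fun w => ξ w i • V i w) z (F z) - fderiv ℝ F z (ξ z i • V i z)) := by
        simp only [lieB, h1, ContinuousLinearMap.sum_apply]
        rw [map_sum, Finset.sum_sub_distrib]
    _ = ∑ i, (ξ z i • lieB F (V i) z + (fderiv ℝ (fun w => ξ w i) z (F z)) • V i z) :=
        Finset.sum_congr rfl (fun i _ => key i)
    _ = _ := Finset.sum_add_distrib

theorem contDiffOn_det {X : Type*} [NormedAddCommGroup X] [NormedSpace ℝ X]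
    {s : Set X} {r : ℕ} {B : X → Matrix (Fin r) (Fin r) ℝ}
    (hB : ∀ i j, ContDiffOn ℝ (⊤ : ℕ∞) (fun z => B z i j) s) :
    ContDiffOn ℝ (⊤ : ℕ∞) (fun z => (B z).det) s := by
  simp only [Matrix.det_apply']
  exact ContDiffOn.sum fun σ _ =>
    contDiffOn_const.mul (contDiffOn_prod fun i _ => hB _ _)

theorem contDiffOn_adjugate {X : Type*} [NormedAddCommGroup X] [NormedSpace ℝ X]
    {s : Set X} {r : ℕ} {B : X → Matrix (Fin r) (Fin r) ℝ}
    (hB : ∀ i j, ContDiffOn ℝ (⊤ : ℕ∞) (fun z => B z i j) s) (i j : Fin r) :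
    ContDiffOn ℝ (⊤ : ℕ∞) (fun z => (B z).adjugate i j) s := by
  simp only [Matrix.adjugate_apply]
  apply contDiffOn_det
  intro a b
  by_cases h : a = j
  · simp only [h, Matrix.updateRow_self]; exact contDiffOn_const
  · simp only [Matrix.updateRow_ne h]; exact hB a b

open Set Submodule Module Matrix in
theorem density_core (m n : ℕ)
    (U : Set (Fin m → ℝ)) (hU : IsOpen U)
    (V : Fin n → (Fin m → ℝ) → Fin m → ℝ)
    (hVsmooth : ∀ i, ContDiffOn ℝ (⊤ : ℕ∞) (V i) U)
    (hVli : ∀ z ∈ U, LinearIndependent ℝ (fun i => V i z))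
    (F : (Fin m → ℝ) → Fin m → ℝ) (hF : ContDiffOn ℝ (⊤ : ℕ∞) F U)
    (hreg : ∀ U' : Set (Fin m → ℝ), U' ⊆ U → IsOpen U' → U'.Nonempty →
      ∀ ξ : (Fin m → ℝ) → Fin n → ℝ, ContDiffOn ℝ (⊤ : ℕ∞) ξ U' →
        (∀ z ∈ U', lieB F (fun w => ∑ i, ξ w i • V i w) z ∈
          Submodule.span ℝ (Set.range fun k => V k z)) →
        ∀ z ∈ U', ξ z = 0)
    (U0 : Set (Fin m → ℝ)) (hU0U : U0 ⊆ U) (hU0o : IsOpen U0) (hU0ne : U0.Nonempty)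
    (hdep : ∀ z ∈ U0, ¬ LinearIndependent ℝ
      (Sum.elim (fun i => V i z) (fun i : Fin n => lieB F (V i) z))) : False := by
  classical
  set cols : (Fin m → ℝ) → (Fin n ⊕ Fin n) → (Fin m → ℝ) :=
    fun z => Sum.elim (fun i => V i z) (fun i : Fin n => lieB F (V i) z) with hcolsdef
  have hcolsm : ∀ k : Fin n ⊕ Fin n, ContDiffOn ℝ (⊤ : ℕ∞) (fun z => cols z k) U := by
    rintro (i | i)
    · exact hVsmooth i
    · exact lieB_contDiffOn hU hF (hVsmooth i)
  set d : (Fin m → ℝ) → ℕ :=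
    fun z => Module.finrank ℝ (Submodule.span ℝ (Set.range (cols z))) with hddef
  -- choose z1 maximizing d on U0
  obtain ⟨z1, hz1U0, hz1max⟩ : ∃ z1 ∈ U0, ∀ z ∈ U0, d z ≤ d z1 := by
    have hbdd : BddAbove (d '' U0) := by
      refine ⟨n + n, ?_⟩
      rintro _ ⟨z, _, rfl⟩
      have := finrank_range_le_card (R := ℝ) (cols z)
      simpa [Set.finrank, Fintype.card_sum] using this
    have hne : (d '' U0).Nonempty := hU0ne.image d
    obtain ⟨z1, hz1, hz1eq⟩ := Nat.sSup_mem hne hbdd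
    exact ⟨z1, hz1, fun z hz => hz1eq ▸ le_csSup hbdd (Set.mem_image_of_mem d hz)⟩
  have hz1U : z1 ∈ U := hU0U hz1U0
  -- choose maximal independent K containing the inl indices
  set K0 : Finset (Fin n ⊕ Fin n) := Finset.univ.image Sum.inl with hK0def
  have hP0 : K0 ⊆ K0 ∧ LinearIndependent ℝ (fun k : K0 => cols z1 (k : Fin n ⊕ Fin n)) := by
    constructor
    · exact subset_rfl
    · have hex : ∀ k : K0, ∃ i : Fin n, (k : Fin n ⊕ Fin n) = Sum.inl i := by
        rintro ⟨k, hk⟩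
        simp only [hK0def, Finset.mem_image, Finset.mem_univ, true_and] at hk
        obtain ⟨i, hi⟩ := hk
        exact ⟨i, hi.symm⟩
      set h : K0 → Fin n := fun k => (hex k).choose with hhdef
      have hhspec : ∀ k : K0, (k : Fin n ⊕ Fin n) = Sum.inl (h k) := fun k => (hex k).choose_spec
      have hinj : Function.Injective h := by
        intro k1 k2 hk
        apply Subtype.ext
        rw [hhspec k1, hhspec k2, hk]
      have heq : (fun k : K0 => cols z1 (k : Fin n ⊕ Fin n)) = (fun i => V i z1) ∘ h := by
        funext k
        rw [hhspec k]
        rfl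
      rw [heq]
      exact (hVli z1 hz1U).comp h hinj
  obtain ⟨K, hKP, hKmax⟩ := Set.Finite.exists_maximalFor
    (fun K : Finset (Fin n ⊕ Fin n) => K.card)
    {K : Finset (Fin n ⊕ Fin n) | K0 ⊆ K ∧
      LinearIndependent ℝ (fun k : K => cols z1 (k : Fin n ⊕ Fin n))}
    (Set.toFinite _) ⟨K0, hP0⟩
  obtain ⟨hKinl, hKli⟩ := hKP
  -- spanning property of K at z1
  have hKinj : Set.InjOn (cols z1) (K : Set (Fin n ⊕ Fin n)) := by
    rw [Set.injOn_iff_injective]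
    exact hKli.injective
  have hspan : ∀ k0 : Fin n ⊕ Fin n, cols z1 k0 ∈ Submodule.span ℝ (cols z1 '' (K : Set _)) := by
    intro k0
    by_contra hk0
    have hk0K : k0 ∉ K := fun h => hk0 (Submodule.subset_span ⟨k0, h, rfl⟩)
    have himg : LinearIndependent ℝ
        (fun x : (cols z1 '' (K : Set (Fin n ⊕ Fin n))) => (x : Fin m → ℝ)) :=
      (linearIndepOn_iff_image hKinj).1 hKli
    have hins : LinearIndependent ℝ
        (fun x : (insert (cols z1 k0) (cols z1 '' (K : Set (Fin n ⊕ Fin n))) :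
          Set (Fin m → ℝ)) => (x : Fin m → ℝ)) :=
      LinearIndepOn.id_insert himg hk0
    have hnotimg : cols z1 k0 ∉ cols z1 '' (K : Set (Fin n ⊕ Fin n)) :=
      fun h => hk0 (Submodule.subset_span h)
    have hinj2 : Set.InjOn (cols z1) (insert k0 (K : Set (Fin n ⊕ Fin n))) := by
      intro a ha b hb hab
      rcases ha with rfl | ha
      · rcases hb with rfl | hb
        · rfl
        · exact absurd (hab ▸ Set.mem_image_of_mem _ hb) hnotimg
      · rcases hb with rfl | hb
        · exact absurd (hab ▸ Set.mem_image_of_mem _ ha) hnotimg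
        · exact hKinj ha hb hab
    have hli2 : LinearIndependent ℝ
        (fun k : (insert k0 K : Finset (Fin n ⊕ Fin n)) => cols z1 (k : Fin n ⊕ Fin n)) := by
      have h := (linearIndepOn_iff_image hinj2).2 (by rwa [Set.image_insert_eq])
      have hcoe : (insert k0 (K : Set (Fin n ⊕ Fin n)))
          = ((insert k0 K : Finset (Fin n ⊕ Fin n)) : Set (Fin n ⊕ Fin n)) :=
        (Finset.coe_insert k0 K).symm
      rw [hcoe] at h
      exact h
    have hPins : K0 ⊆ insert k0 K ∧ LinearIndependent ℝ
        (fun k : (insert k0 K : Finset (Fin n ⊕ Fin n)) => cols z1 (k : Fin n ⊕ Fin n)) :=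
      ⟨hKinl.trans (Finset.subset_insert _ _), hli2⟩
    have hcard : (insert k0 K).card ≤ K.card := hKmax hPins (Finset.card_le_card (Finset.subset_insert _ _))
    rw [Finset.card_insert_of_notMem hk0K] at hcard
    omega
  -- card K = d z1
  have hcardK : K.card = d z1 := by
    have h1 : Submodule.span ℝ (cols z1 '' (K : Set _)) = Submodule.span ℝ (Set.range (cols z1)) := by
      apply le_antisymm (Submodule.span_mono (Set.image_subset_range _ _))
      rw [Submodule.span_le]
      rintro _ ⟨k0, rfl⟩
      exact hspan k0
    have h2 := finrank_span_eq_card hKli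
    rw [show Set.range (fun k : K => cols z1 (k : Fin n ⊕ Fin n))
      = cols z1 '' (K : Set _) from (Set.image_eq_range _ _).symm, h1] at h2
    rw [← Fintype.card_coe K, ← h2]
  have hKlt : K.card < n + n := by
    have hle : K.card ≤ n + n := by
      have := Finset.card_le_univ K
      simpa [Fintype.card_sum] using this
    have hne : d z1 ≠ n + n := by
      intro h
      apply hdep z1 hz1U0
      have : LinearIndependent ℝ (cols z1) := by
        rw [linearIndependent_iff_card_eq_finrank_span]
        simp only [hddef] at h
        simp only [Set.finrank, Fintype.card_sum, Fintype.card_fin]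
        omega
      exact this
    omega
  obtain ⟨j0, hj0⟩ : ∃ j0 : Fin n, Sum.inr j0 ∉ K := by
    by_contra h
    push_neg at h
    have hsub : (Finset.univ : Finset (Fin n ⊕ Fin n)) ⊆ K := by
      intro x _
      cases x with
      | inl i => exact hKinl (Finset.mem_image_of_mem _ (Finset.mem_univ i))
      | inr i => exact h i
    have := Finset.card_le_card hsub
    simp [Fintype.card_sum] at this
    omega
  -- enumeration of K
  set r : ℕ := K.card with hrdef
  set u : Fin r → Fin n ⊕ Fin n :=
    fun p => ((K.equivFin.symm p : K) : Fin n ⊕ Fin n) with hudef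
  have huK : ∀ p, u p ∈ K := fun p => (K.equivFin.symm p).2
  have hune : ∀ p, u p ≠ Sum.inr j0 := fun p h => hj0 (h ▸ huK p)
  have huli : LinearIndependent ℝ (fun p => cols z1 (u p)) :=
    hKli.comp (fun p => K.equivFin.symm p) K.equivFin.symm.injective
  -- a left inverse of the column map
  set T : (Fin r → ℝ) →ₗ[ℝ] (Fin m → ℝ) :=
    Fintype.linearCombination ℝ (fun p => cols z1 (u p)) with hTdef
  have hTapp : ∀ c : Fin r → ℝ, T c = ∑ p, c p • cols z1 (u p) := by
    intro c
    simp [hTdef, Fintype.linearCombination_apply]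
  have hTker : LinearMap.ker T = ⊥ := by
    rw [LinearMap.ker_eq_bot']
    intro c hc
    rw [hTapp] at hc
    exact funext (Fintype.linearIndependent_iff.1 huli c hc)
  obtain ⟨π, hπ⟩ := T.exists_leftInverse_of_injective hTker
  have hπT : ∀ c, π (T c) = c := fun c => LinearMap.ext_iff.1 hπ c
  set pe : Fin r → ((Fin m → ℝ) →L[ℝ] ℝ) :=
    fun q => LinearMap.toContinuousLinearMap ((LinearMap.proj q).comp π) with hpedef
  have hpe : ∀ q x, pe q x = π x q := fun q x => rfl
  set N : (Fin m → ℝ) → Matrix (Fin r) (Fin r) ℝ :=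
    fun z => Matrix.of fun p q => pe p (cols z (u q)) with hNdef
  have hN1 : N z1 = 1 := by
    ext p q
    have h1 : cols z1 (u q) = T (Pi.single q 1) := by
      rw [hTapp]
      simp [Pi.single_apply, ite_smul]
    show pe p (cols z1 (u q)) = (1 : Matrix (Fin r) (Fin r) ℝ) p q
    rw [h1, hpe, hπT, Matrix.one_apply]
    simp [Pi.single_apply]
  have hNsm : ∀ p q, ContDiffOn ℝ (⊤ : ℕ∞) (fun z => N z p q) U :=
    fun p q => (pe p).contDiff.comp_contDiffOn (hcolsm (u q))
  have hdet : ContDiffOn ℝ (⊤ : ℕ∞) (fun z => (N z).det) U := contDiffOn_det hNsm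
  -- the open set U2 on which everything is nice
  set U1 : Set (Fin m → ℝ) :=
    U0 ∩ (fun z => fun p => cols z (u p)) ⁻¹'
      {f : Fin r → Fin m → ℝ | LinearIndependent ℝ f} with hU1def
  have hU1o : IsOpen U1 := by
    apply ContinuousOn.isOpen_inter_preimage ?_ hU0o isOpen_setOf_linearIndependent
    exact continuousOn_pi.2 fun p => ((hcolsm (u p)).continuousOn.mono hU0U)
  have hz1U1 : z1 ∈ U1 := ⟨hz1U0, huli⟩
  have hU1U : U1 ⊆ U := fun z hz => hU0U hz.1
  set U2 : Set (Fin m → ℝ) := U1 ∩ (fun z => (N z).det) ⁻¹' ({0}ᶜ) with hU2def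
  have hU2o : IsOpen U2 :=
    ContinuousOn.isOpen_inter_preimage (hdet.continuousOn.mono hU1U) hU1o
      isOpen_compl_singleton
  have hz1U2 : z1 ∈ U2 := ⟨hz1U1, by simp [hN1]⟩
  have hU2U : U2 ⊆ U := fun z hz => hU0U hz.1.1
  have hdet0 : ∀ z ∈ U2, (N z).det ≠ 0 := fun z hz => hz.2
  -- the coefficient functions
  set μ : (Fin m → ℝ) → Fin r → ℝ :=
    fun z => ((N z).det)⁻¹ •
      ((N z).adjugate *ᵥ (fun q => pe q (cols z (Sum.inr j0)))) with hμdef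
  have hrepr : ∀ z ∈ U2, cols z (Sum.inr j0) = ∑ p, μ z p • cols z (u p) := by
    rintro z ⟨⟨hzU0, hzli⟩, hzdet⟩
    have hzdet' : (N z).det ≠ 0 := hzdet
    have hzli' : LinearIndependent ℝ (fun p => cols z (u p)) := hzli
    have hsp : Submodule.span ℝ (Set.range fun p => cols z (u p))
        = Submodule.span ℝ (Set.range (cols z)) := by
      apply Submodule.eq_of_le_of_finrank_le
      · exact Submodule.span_mono (by rintro _ ⟨p, rfl⟩; exact Set.mem_range_self (u p))
      · have hA : Module.finrank ℝ
            (Submodule.span ℝ (Set.range fun p => cols z (u p))) = r := by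
          rw [finrank_span_eq_card hzli']
          simp
        rw [hA]
        calc Module.finrank ℝ (Submodule.span ℝ (Set.range (cols z))) = d z := rfl
          _ ≤ d z1 := hz1max z hzU0
          _ = r := hcardK.symm
    have hmem' : cols z (Sum.inr j0) ∈
        Submodule.span ℝ (Set.range fun p => cols z (u p)) := by
      rw [hsp]
      exact Submodule.subset_span (Set.mem_range_self _)
    obtain ⟨c, hc⟩ := (mem_span_range_iff_exists_fun ℝ).1 hmem'
    have hvec : (N z) *ᵥ c = fun q => pe q (cols z (Sum.inr j0)) := by
      funext q
      rw [← hc]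
      simp only [Matrix.mulVec, dotProduct, map_sum, _root_.map_smul]
      simp [hNdef, mul_comm, smul_eq_mul]
    have hμc : μ z = c := by
      rw [hμdef]
      calc ((N z).det)⁻¹ • ((N z).adjugate *ᵥ (fun q => pe q (cols z (Sum.inr j0))))
          = ((N z).det)⁻¹ • ((N z).adjugate *ᵥ ((N z) *ᵥ c)) := by rw [hvec]
        _ = ((N z).det)⁻¹ • (((N z).adjugate * (N z)) *ᵥ c) := by
            rw [Matrix.mulVec_mulVec]
        _ = ((N z).det)⁻¹ • (((N z).det • (1 : Matrix (Fin r) (Fin r) ℝ)) *ᵥ c) := by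
            rw [Matrix.adjugate_mul]
        _ = ((N z).det)⁻¹ • ((N z).det • c) := by
            rw [Matrix.smul_mulVec, Matrix.one_mulVec]
        _ = c := by rw [smul_smul, inv_mul_cancel₀ hzdet', one_smul]
    rw [hμc, hc]
  have hvq : ∀ q, ContDiffOn ℝ (⊤ : ℕ∞) (fun z => pe q (cols z (Sum.inr j0))) U :=
    fun q => (pe q).contDiff.comp_contDiffOn (hcolsm (Sum.inr j0))
  have hμsm : ∀ p, ContDiffOn ℝ (⊤ : ℕ∞) (fun z => μ z p) U2 := by
    intro p
    have heq : (fun z => μ z p)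
        = fun z => ((N z).det)⁻¹ *
            ∑ q, (N z).adjugate p q * pe q (cols z (Sum.inr j0)) := by
      funext z
      simp [hμdef, Matrix.mulVec, dotProduct]
    rw [heq]
    apply ContDiffOn.mul
    · exact (hdet.mono hU2U).inv hdet0
    · exact ContDiffOn.sum fun q _ =>
        ((contDiffOn_adjugate hNsm p q).mono hU2U).mul ((hvq q).mono hU2U)
  -- the test function ξ
  set ξ : (Fin m → ℝ) → Fin n → ℝ :=
    fun z i => (if i = j0 then (1 : ℝ) else 0)
      - ∑ p, (if u p = Sum.inr i then μ z p else 0) with hξdef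
  have hξsm : ContDiffOn ℝ (⊤ : ℕ∞) ξ U2 := by
    apply contDiffOn_pi.2
    intro i
    apply ContDiffOn.sub contDiffOn_const
    apply ContDiffOn.sum
    intro p _
    by_cases h : u p = Sum.inr i
    · simpa [h] using hμsm p
    · simp only [h, if_false]
      exact contDiffOn_const
  have hξz1 : ξ z1 j0 = 1 := by
    have hz0 : ∑ p, (if u p = Sum.inr j0 then μ z1 p else 0) = (0 : ℝ) :=
      Finset.sum_eq_zero fun p _ => if_neg (hune p)
    simp [hξdef, hz0]
  -- the bracket membership hypothesis of hreg
  have hmem : ∀ z ∈ U2, lieB F (fun w => ∑ i, ξ w i • V i w) z ∈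
      Submodule.span ℝ (Set.range fun k => V k z) := by
    intro z hz
    have hzU : z ∈ U := hU2U hz
    have hFd : DifferentiableAt ℝ F z :=
      (hF.contDiffAt (hU.mem_nhds hzU)).differentiableAt (by simp)
    have hVd : ∀ i, DifferentiableAt ℝ (V i) z := fun i =>
      ((hVsmooth i).contDiffAt (hU.mem_nhds hzU)).differentiableAt (by simp)
    have hξd : ∀ i, DifferentiableAt ℝ (fun w => ξ w i) z := fun i =>
      ((contDiffOn_pi.1 hξsm i).contDiffAt (hU2o.mem_nhds hz)).differentiableAt (by simp)
    rw [lieB_sum_smul_eq hFd hVd hξd]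
    apply Submodule.add_mem
    · have hsplit : ∑ i, ξ z i • lieB F (V i) z
          = ∑ p, (μ z p • cols z (u p)
              - Sum.elim (fun _ => (0 : Fin m → ℝ))
                  (fun b => μ z p • cols z (Sum.inr b)) (u p)) := by
        have e1 : ∑ i, ξ z i • lieB F (V i) z
            = (∑ i, (if i = j0 then (1 : ℝ) else 0) • lieB F (V i) z)
              - ∑ i, (∑ p, (if u p = Sum.inr i then μ z p else 0)) • lieB F (V i) z := by
          rw [← Finset.sum_sub_distrib]
          apply Finset.sum_congr rfl
          intro i _
          rw [hξdef, sub_smul]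
        have e2 : (∑ i, (if i = j0 then (1 : ℝ) else 0) • lieB F (V i) z)
            = lieB F (V j0) z := by
          simp [ite_smul]
        have e3 : ∑ i, (∑ p, (if u p = Sum.inr i then μ z p else 0)) • lieB F (V i) z
            = ∑ p, (Sum.elim (fun _ => (0 : Fin m → ℝ))
                (fun b => μ z p • cols z (Sum.inr b)) (u p)) := by
          have e3a : ∀ i : Fin n,
              (∑ p, (if u p = Sum.inr i then μ z p else 0)) • lieB F (V i) z
              = ∑ p, (if u p = Sum.inr i then μ z p • lieB F (V i) z else 0) := by
            intro i
            rw [Finset.sum_smul]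
            exact Finset.sum_congr rfl fun p _ => by rw [ite_smul, zero_smul]
          rw [Finset.sum_congr rfl fun i _ => e3a i, Finset.sum_comm]
          apply Finset.sum_congr rfl
          intro p _
          cases hp : u p with
          | inl a => simp [hp]
          | inr b =>
            simp only [hp, Sum.elim_inr, Sum.inr.injEq]
            rw [Finset.sum_ite_eq]
            simp
            rfl
        have e4 : lieB F (V j0) z = ∑ p, μ z p • cols z (u p) := hrepr z hz
        rw [e1, e2, e3, e4, Finset.sum_sub_distrib]
      rw [hsplit]
      apply Submodule.sum_mem
      intro p _
      cases hp : u p with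
      | inl a =>
        simp only [Sum.elim_inl, sub_zero]
        exact Submodule.smul_mem _ _ (Submodule.subset_span (Set.mem_range_self a))
      | inr b =>
        simp only [Sum.elim_inr, sub_self]
        exact Submodule.zero_mem _
    · exact Submodule.sum_mem _ fun i _ =>
        Submodule.smul_mem _ _ (Submodule.subset_span (Set.mem_range_self i))
  have hfin := hreg U2 hU2U hU2o ⟨z1, hz1U2⟩ ξ hξsm hmem z1 hz1U2
  rw [hfin] at hξz1
  simpa using hξz1

theorem stmt0 (m n : ℕ) (hm : 0 < m) (hn : 0 < n) (hmn : 2 * n ≤ m)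
    (U : Set (Fin m → ℝ)) (hU : IsOpen U) (hUne : U.Nonempty)
    (V : Fin n → (Fin m → ℝ) → Fin m → ℝ)
    (hVsmooth : ∀ i, ContDiffOn ℝ (⊤ : ℕ∞) (V i) U)
    (hVli : ∀ z ∈ U, LinearIndependent ℝ (fun i => V i z))
    (hVinv : ∀ z ∈ U, ∀ i j, lieB (V i) (V j) z ∈
      Submodule.span ℝ (Set.range fun k => V k z))
    (F : (Fin m → ℝ) → Fin m → ℝ) (hF : ContDiffOn ℝ (⊤ : ℕ∞) F U)
    (hreg : ∀ U' : Set (Fin m → ℝ), U' ⊆ U → IsOpen U' → U'.Nonempty →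
      ∀ ξ : (Fin m → ℝ) → Fin n → ℝ, ContDiffOn ℝ (⊤ : ℕ∞) ξ U' →
        (∀ z ∈ U', lieB F (fun w => ∑ i, ξ w i • V i w) z ∈
          Submodule.span ℝ (Set.range fun k => V k z)) →
        ∀ z ∈ U', ξ z = 0) :
    IsOpen {z | z ∈ U ∧ LinearIndependent ℝ
        (Sum.elim (fun i => V i z) (fun i : Fin n => lieB F (V i) z))} ∧
    U ⊆ closure {z | z ∈ U ∧ LinearIndependent ℝ
        (Sum.elim (fun i => V i z) (fun i : Fin n => lieB F (V i) z))} := by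
  have hcolsm : ∀ k : Fin n ⊕ Fin n, ContDiffOn ℝ (⊤ : ℕ∞)
      (fun z => Sum.elim (fun i => V i z) (fun i : Fin n => lieB F (V i) z) k) U := by
    rintro (i | i)
    · exact hVsmooth i
    · exact lieB_contDiffOn hU hF (hVsmooth i)
  have hopen : IsOpen {z | z ∈ U ∧ LinearIndependent ℝ
      (Sum.elim (fun i => V i z) (fun i : Fin n => lieB F (V i) z))} := by
    have hcont : ContinuousOn
        (fun z => Sum.elim (fun i => V i z) (fun i : Fin n => lieB F (V i) z)) U :=
      continuousOn_pi.2 fun k => (hcolsm k).continuousOn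
    have := hcont.isOpen_inter_preimage hU
      (isOpen_setOf_linearIndependent (𝕜 := ℝ) (E := Fin m → ℝ))
    convert this using 1
    rfl
  refine ⟨hopen, ?_⟩
  intro z0 hz0
  by_contra hcl
  rw [mem_closure_iff] at hcl
  push_neg at hcl
  obtain ⟨O, hOo, hz0O, hO⟩ := hcl
  have hdep : ∀ z ∈ O ∩ U, ¬ LinearIndependent ℝ
      (Sum.elim (fun i => V i z) (fun i : Fin n => lieB F (V i) z)) := by
    intro z hz hli
    exact Set.eq_empty_iff_forall_notMem.1 hO z ⟨hz.1, hz.2, hli⟩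
  exact density_core m n U hU V hVsmooth hVli F hF hreg (O ∩ U)
    Set.inter_subset_right (hOo.inter hU) ⟨z0, hz0O, hz0⟩ hdep
end

section
/- Let U ⊆ ℝ^m be a nonempty open set, let n ≤ p be positive integers, and let A : U → (ℝ^n →ₗ ℝ^p) be a smooth family of linear maps such that rank A(z) < n for every z ∈ U. Then there exist a nonempty open subset U' ⊆ U and a smooth map v : U' → ℝ^n which is nowhere zero on U' and satisfies A(z)(v(z)) = 0 for all z ∈ U'. -/
open Matrix

lemma auxDet {m k : ℕ} {s : Set (Fin m → ℝ)}
    (N : (Fin m → ℝ) → Matrix (Fin k) (Fin k) ℝ)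
    (h : ∀ i j, ContDiffOn ℝ (⊤ : ℕ∞) (fun z => N z i j) s) :
    ContDiffOn ℝ (⊤ : ℕ∞) (fun z => (N z).det) s := by
  simp_rw [Matrix.det_apply']
  apply ContDiffOn.sum
  intro σ _
  exact contDiffOn_const.mul (contDiffOn_prod fun i _ => h (σ i) i)

lemma auxIndep {ι : Type*} [Fintype ι] {V : Type*} [AddCommGroup V] [Module ℝ V]
    (v : ι → V) (r : ℕ) (hr : Module.finrank ℝ (Submodule.span ℝ (Set.range v)) = r) :
    ∃ γ : Fin r → ι, Function.Injective γ ∧ LinearIndependent ℝ (v ∘ γ) := by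
  obtain ⟨b, hbsub, hbspan, hbind⟩ := exists_linearIndependent ℝ (Set.range v)
  have hbfin : b.Finite := (Set.finite_range v).subset hbsub
  haveI : Fintype b := hbfin.fintype
  have hcard : Fintype.card b = r := by
    rw [← hr, ← hbspan]
    rw [finrank_span_set_eq_card hbind, Set.toFinset_card]
  let e : Fin r ≃ b := (Fintype.equivFinOfCardEq hcard).symm
  have hspec : ∀ x : b, v ((hbsub x.2).choose) = x := fun x => (hbsub x.2).choose_spec
  refine ⟨fun k => (hbsub (e k).2).choose, ?_, ?_⟩
  · intro a b' hab
    apply e.injective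
    apply Subtype.ext
    rw [← hspec (e a), ← hspec (e b')]
    exact congrArg v hab
  · have : v ∘ (fun k => (hbsub (e k).2).choose) = (Subtype.val : b → V) ∘ e := by
      funext k; exact hspec (e k)
    rw [this]
    exact hbind.comp e e.injective

lemma auxRankSub {p n r q : ℕ} (N : Matrix (Fin p) (Fin n) ℝ)
    (ρ : Fin r → Fin p) (γ : Fin q → Fin n) :
    (N.submatrix ρ γ).rank ≤ N.rank := by
  have h1 : N.submatrix id γ = N * ((1 : Matrix (Fin n) (Fin n) ℝ).submatrix (Equiv.refl _) γ) := by
    rw [Matrix.mul_submatrix_one]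
    rfl
  have h2 : N.submatrix ρ γ = ((1 : Matrix (Fin p) (Fin p) ℝ).submatrix ρ (Equiv.refl _)) * (N.submatrix id γ) := by
    rw [Matrix.one_submatrix_mul]
    rfl
  calc (N.submatrix ρ γ).rank ≤ (N.submatrix id γ).rank := by
        rw [h2]; exact Matrix.rank_mul_le_right _ _
    _ ≤ N.rank := by rw [h1]; exact Matrix.rank_mul_le_left _ _

lemma auxSnocInj {r n : ℕ} (γ : Fin r → Fin n) (c : Fin n) (hγ : Function.Injective γ)
    (hc : c ∉ Set.range γ) : Function.Injective (Fin.snoc γ c : Fin (r+1) → Fin n) := by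
  intro a b hab
  induction a using Fin.lastCases with
  | last => induction b using Fin.lastCases with
    | last => rfl
    | cast j =>
      simp only [Fin.snoc_last, Fin.snoc_castSucc] at hab
      exact absurd ⟨j, hab.symm⟩ hc
  | cast i => induction b using Fin.lastCases with
    | last =>
      simp only [Fin.snoc_last, Fin.snoc_castSucc] at hab
      exact absurd ⟨i, hab⟩ hc
    | cast j =>
      simp only [Fin.snoc_castSucc] at hab
      exact congrArg Fin.castSucc (hγ hab)

lemma auxDetZero {k : ℕ} (Q : Matrix (Fin (k+1)) (Fin (k+1)) ℝ) (h : Q.rank ≤ k) : Q.det = 0 := by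
  by_contra hd
  have : IsUnit Q := (Matrix.isUnit_iff_isUnit_det Q).mpr (isUnit_iff_ne_zero.mpr hd)
  have := Matrix.rank_of_isUnit Q this
  rw [this] at h
  simp at h

lemma auxRankToMatrix {n p : ℕ} (f : (Fin n → ℝ) →ₗ[ℝ] (Fin p → ℝ)) :
    (LinearMap.toMatrix' f).rank = Module.finrank ℝ (LinearMap.range f) := by
  have : (LinearMap.toMatrix' f).mulVecLin = f := by
    ext x
    simp [Matrix.mulVecLin_apply, ← Matrix.toLin'_apply, Matrix.toLin'_toMatrix']
  rw [Matrix.rank, this]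

theorem stmt1 (m n p : ℕ) (hn : 0 < n) (hp : 0 < p) (hnp : n ≤ p)
    (U : Set (Fin m → ℝ)) (hU : IsOpen U) (hUne : U.Nonempty)
    (A : (Fin m → ℝ) → ((Fin n → ℝ) →L[ℝ] (Fin p → ℝ)))
    (hA : ContDiffOn ℝ (⊤ : ℕ∞) A U)
    (hrank : ∀ z ∈ U, Module.finrank ℝ (LinearMap.range (A z).toLinearMap) < n) :
    ∃ U' : Set (Fin m → ℝ), U' ⊆ U ∧ IsOpen U' ∧ U'.Nonempty ∧
      ∃ v : (Fin m → ℝ) → Fin n → ℝ, ContDiffOn ℝ (⊤ : ℕ∞) v U' ∧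
        ∀ z ∈ U', v z ≠ 0 ∧ A z (v z) = 0 := by
  classical
  set M : (Fin m → ℝ) → Matrix (Fin p) (Fin n) ℝ :=
    fun z => LinearMap.toMatrix' ((A z) : (Fin n → ℝ) →ₗ[ℝ] (Fin p → ℝ)) with hM
  have hMentry : ∀ (a : Fin p) (b : Fin n), ContDiffOn ℝ (⊤ : ℕ∞) (fun z => M z a b) U := by
    intro a b
    have h1 : (fun z => M z a b) =
        fun z => ((ContinuousLinearMap.proj (R := ℝ) (φ := fun _ : Fin p => ℝ) a).comp
          (ContinuousLinearMap.apply ℝ (Fin p → ℝ)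
            (fun j' : Fin n => if j' = b then (1:ℝ) else 0))) (A z) := by
      funext z
      simp [hM, LinearMap.toMatrix'_apply]
      rw [show (Pi.single b (1:ℝ) : Fin n → ℝ) = fun j' => if j' = b then 1 else 0 from by funext j'; simp [Pi.single_apply]]
    rw [h1]
    exact (ContinuousLinearMap.contDiff _).comp_contDiffOn hA
  have hApply : ∀ z (x : Fin n → ℝ), A z x = (M z).mulVec x := by
    intro z x
    rw [hM, ← Matrix.toLin'_apply, Matrix.toLin'_toMatrix']
    rfl
  have hMrank : ∀ z, (M z).rank = Module.finrank ℝ (LinearMap.range (A z).toLinearMap) :=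
    fun z => auxRankToMatrix _
  set S : Set ℕ := (fun z => (M z).rank) '' U with hS
  have hSne : S.Nonempty := hUne.image _
  have hSbdd : BddAbove S := ⟨n, by
    rintro _ ⟨z, hz, rfl⟩
    show (M z).rank ≤ n
    rw [hMrank]; exact (hrank z hz).le⟩
  set r : ℕ := sSup S with hr
  obtain ⟨z₀, hz₀U, hz₀r0⟩ := Nat.sSup_mem hSne hSbdd
  have hz₀r : (M z₀).rank = r := hz₀r0
  have hler : ∀ z ∈ U, (M z).rank ≤ r := fun z hz => le_csSup hSbdd ⟨z, hz, rfl⟩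
  have hrn : r < n := by rw [← hz₀r, hMrank]; exact hrank z₀ hz₀U
  obtain ⟨γ, hγinj, hγind⟩ := auxIndep ((M z₀)ᵀ) r
    (by rw [show Set.range (M z₀)ᵀ = Set.range (M z₀).col from rfl, ← Matrix.rank_eq_finrank_span_cols, hz₀r])
  set C : Matrix (Fin p) (Fin r) ℝ := (M z₀).submatrix id γ with hC
  have hCrank : Cᵀ.rank = r := by
    rw [Matrix.rank_transpose, Matrix.rank_eq_finrank_span_cols]
    have hcc : Cᵀ = (M z₀)ᵀ ∘ γ := by
      funext j i
      rfl
    rw [show C.col = (M z₀)ᵀ ∘ γ from hcc]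
    rw [finrank_span_eq_card hγind, Fintype.card_fin]
  obtain ⟨ρ, hρinj, hρind⟩ := auxIndep ((Cᵀ)ᵀ) r
    (by rw [show Set.range Cᵀᵀ = Set.range Cᵀ.col from rfl, ← Matrix.rank_eq_finrank_span_cols, hCrank])
  have hdet0 : ((M z₀).submatrix ρ γ).det ≠ 0 := by
    have hrows : LinearIndependent ℝ (fun i => ((M z₀).submatrix ρ γ) i) := by
      have he : (fun i => ((M z₀).submatrix ρ γ) i) = ((Cᵀ)ᵀ ∘ ρ) := by
        funext i
        funext j
        rfl
      rw [he]
      exact hρind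
    have hu := Matrix.linearIndependent_rows_iff_isUnit.mp hrows
    exact ((Matrix.isUnit_iff_isUnit_det _).mp hu).ne_zero
  have hdetC : ContDiffOn ℝ (⊤ : ℕ∞) (fun z => ((M z).submatrix ρ γ).det) U :=
    auxDet (fun z => (M z).submatrix ρ γ) (fun i j => hMentry (ρ i) (γ j))
  set U' : Set (Fin m → ℝ) :=
    U ∩ (fun z => ((M z).submatrix ρ γ).det) ⁻¹' ({(0:ℝ)}ᶜ) with hU'
  have hU'sub : U' ⊆ U := Set.inter_subset_left
  have hU'open : IsOpen U' :=
    hdetC.continuousOn.isOpen_inter_preimage hU isOpen_compl_singleton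
  have hz₀U' : z₀ ∈ U' := ⟨hz₀U, hdet0⟩
  have hdetne : ∀ z ∈ U', ((M z).submatrix ρ γ).det ≠ 0 := fun z hz => hz.2
  obtain ⟨c, hc⟩ : ∃ c : Fin n, c ∉ Set.range γ := by
    by_contra h
    push_neg at h
    have hsurj : Function.Surjective γ := fun c => h c
    have := Fintype.card_le_of_surjective γ hsurj
    simp only [Fintype.card_fin] at this
    omega
  set γ' : Fin (r+1) → Fin n := Fin.snoc γ c with hγ'
  have hγ'inj : Function.Injective γ' := auxSnocInj γ c hγinj hc
  have hγ'last : γ' (Fin.last r) = c := by simp [hγ']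
  have hcomp : γ' ∘ (Fin.last r).succAbove = γ := by
    funext j
    simp [hγ', Fin.succAbove_last, Fin.snoc_castSucc]
  set v' : (Fin m → ℝ) → Fin (r+1) → ℝ :=
    fun z j => (-1 : ℝ)^(r + (j:ℕ)) * ((M z).submatrix ρ (γ' ∘ j.succAbove)).det with hv'
  have hsum : ∀ z ∈ U', ∀ k : Fin p, ∑ j : Fin (r+1), M z k (γ' j) * v' z j = 0 := by
    intro z hz k
    set Q : Matrix (Fin (r+1)) (Fin (r+1)) ℝ := (M z).submatrix (Fin.snoc ρ k) γ' with hQ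
    have hQdet : Q.det = 0 :=
      auxDetZero Q (le_trans (auxRankSub _ _ _) (hler z hz.1))
    have hexp := Matrix.det_succ_row Q (Fin.last r)
    rw [hQdet] at hexp
    have hterm : ∀ j : Fin (r+1), (-1:ℝ)^(((Fin.last r : Fin (r+1)) : ℕ) + (j:ℕ)) * Q (Fin.last r) j *
        (Q.submatrix (Fin.last r).succAbove j.succAbove).det = M z k (γ' j) * v' z j := by
      intro j
      have e1 : Q (Fin.last r) j = M z k (γ' j) := by
        simp [hQ, Matrix.submatrix_apply, Fin.snoc_last]
      have e2 : Q.submatrix (Fin.last r).succAbove j.succAbove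
          = (M z).submatrix ρ (γ' ∘ j.succAbove) := by
        rw [hQ, Matrix.submatrix_submatrix]
        congr 1
        funext i
        simp [Fin.succAbove_last, Fin.snoc_castSucc]
      rw [e1, e2]
      simp only [hv', Fin.val_last]
      ring
    rw [Finset.sum_congr rfl (fun j _ => hterm j)] at hexp
    exact hexp.symm
  set v : (Fin m → ℝ) → Fin n → ℝ :=
    fun z i => ∑ j : Fin (r+1), if γ' j = i then v' z j else 0 with hv
  have hv'smooth : ∀ j : Fin (r+1), ContDiffOn ℝ (⊤ : ℕ∞) (fun z => v' z j) U' :=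
    fun j => contDiffOn_const.mul
      (auxDet _ (fun a b => (hMentry (ρ a) (γ' (j.succAbove b))).mono hU'sub))
  refine ⟨U', hU'sub, hU'open, ⟨z₀, hz₀U'⟩, v, ?_, ?_⟩
  · rw [contDiffOn_pi]
    intro i
    apply ContDiffOn.sum
    intro j _
    by_cases h : γ' j = i
    · simp only [h, if_pos]
      exact hv'smooth j
    · simp only [h, if_neg, if_false]
      exact contDiffOn_const
  · intro z hz
    constructor
    · intro h0
      have hcval := congrFun h0 c
      have hvc : v z c = v' z (Fin.last r) := by
        rw [hv]
        simp only
        rw [Finset.sum_eq_single_of_mem (Fin.last r) (Finset.mem_univ _)]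
        · rw [if_pos hγ'last]
        · intro j _ hj
          rw [if_neg]
          intro hcontra
          exact hj (hγ'inj (hcontra.trans hγ'last.symm))
      rw [hvc] at hcval
      have : v' z (Fin.last r) ≠ 0 := by
        rw [hv']
        simp only [Fin.val_last]
        apply mul_ne_zero
        · exact pow_ne_zero _ (by norm_num)
        · rw [hcomp]
          exact hdetne z hz
      exact this hcval
    · rw [hApply]
      funext k
      simp only [Pi.zero_apply]
      have hmv : (M z).mulVec (v z) k = ∑ i : Fin n, M z k i * v z i := by
        simp [Matrix.mulVec, dotProduct]
      rw [hmv]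
      have hcalc : ∑ i : Fin n, M z k i * v z i
          = ∑ j : Fin (r+1), M z k (γ' j) * v' z j := by
        calc ∑ i : Fin n, M z k i * v z i
            = ∑ j : Fin (r+1), ∑ i : Fin n,
                (if γ' j = i then M z k i * v' z j else 0) := by
              rw [Finset.sum_comm]
              refine Finset.sum_congr rfl fun i _ => ?_
              rw [hv]
              simp only
              rw [Finset.mul_sum]
              refine Finset.sum_congr rfl fun j _ => ?_
              rw [mul_ite, mul_zero]
          _ = ∑ j : Fin (r+1), M z k (γ' j) * v' z j := by
              refine Finset.sum_congr rfl fun j _ => ?_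
              rw [Finset.sum_ite_eq Finset.univ (γ' j) (fun i => M z k i * v' z j)]
              simp
      rw [hcalc]
      exact hsum z hz k
end

section
/- Identify ℝ^m with ℝ^{m−n} × ℝ^n and let e_1, …, e_n be the constant vector fields given by the standard basis vectors of the second factor (the coordinate fields ∂/∂y^i). Let U ⊆ ℝ^m be open, let W_1, …, W_n be smooth vector fields on U such that the 2n vectors e_1(z), …, e_n(z), W_1(z), …, W_n(z) are linearly independent at every z ∈ U, and let α^k_{ij}, β^k_{ij} : U → ℝ be smooth functions satisfying [e_i, W_j] = α^k_{ij} e_k + β^k_{ij} W_k on U for all i, j. Then for all i, j, k, l the identity ∂β^l_{jk}/∂y^i − ∂β^l_{ik}/∂y^j + β^l_{im} β^m_{jk} − β^l_{jm} β^m_{ik} = 0 holds on U. -/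
/-- The constant vector field `∂/∂y^i` on `ℝ^{m−n} × ℝ^n` (here `p = m − n`). -/
def eVec (p n : ℕ) (i : Fin n) : (Fin p → ℝ) × (Fin n → ℝ) := (0, Pi.single i 1)

theorem stmt4 (p n : ℕ)
    (U : Set ((Fin p → ℝ) × (Fin n → ℝ))) (hU : IsOpen U)
    (W : Fin n → ((Fin p → ℝ) × (Fin n → ℝ)) → (Fin p → ℝ) × (Fin n → ℝ))
    (hWsm : ∀ i, ContDiffOn ℝ (⊤ : ℕ∞) (W i) U)
    (hli : ∀ z ∈ U, LinearIndependent ℝ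
      (Sum.elim (fun i : Fin n => eVec p n i) (fun i : Fin n => W i z)))
    -- `α i j k` stands for `α^k_{ij}`, and `β i j k` for `β^k_{ij}`
    (α β : Fin n → Fin n → Fin n → ((Fin p → ℝ) × (Fin n → ℝ)) → ℝ)
    (hα : ∀ i j k, ContDiffOn ℝ (⊤ : ℕ∞) (α i j k) U)
    (hβ : ∀ i j k, ContDiffOn ℝ (⊤ : ℕ∞) (β i j k) U)
    (hrel : ∀ i j, ∀ z ∈ U,
      lieB (fun _ => eVec p n i) (W j) z =
        (∑ k, α i j k z • eVec p n k) + ∑ k, β i j k z • W k z) :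
    ∀ i j k l, ∀ z ∈ U,
      fderiv ℝ (β j k l) z (eVec p n i) - fderiv ℝ (β i k l) z (eVec p n j) +
        ∑ m', (β i m' l z * β j k m' z - β j m' l z * β i k m' z) = 0 := by
  intro i j k l z hz
  have hzU : U ∈ nhds z := hU.mem_nhds hz
  set e : Fin n → (Fin p → ℝ) × (Fin n → ℝ) := eVec p n with he
  have hWca : ∀ m' (y : (Fin p → ℝ) × (Fin n → ℝ)), y ∈ U →
      ContDiffAt ℝ (⊤ : ℕ∞) (W m') y :=
    fun m' y hy => (hWsm m').contDiffAt (hU.mem_nhds hy)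
  have hWd : ∀ m' (y : (Fin p → ℝ) × (Fin n → ℝ)), y ∈ U →
      DifferentiableAt ℝ (W m') y :=
    fun m' y hy => (hWca m' y hy).differentiableAt (by simp)
  have hrel' : ∀ a b, ∀ y ∈ U, fderiv ℝ (W b) y (e a) =
      (∑ c, α a b c y • e c) + ∑ c, β a b c y • W c y := by
    intro a b y hy
    have h := hrel a b y hy
    simpa [lieB] using h
  -- second derivative of W k at z
  have hW'c : ContDiffAt ℝ 1 (fderiv ℝ (W k)) z :=
    (hWca k z hz).fderiv_right (m := 1) (by norm_cast)
  have hW'd : DifferentiableAt ℝ (fderiv ℝ (W k)) z :=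
    hW'c.differentiableAt one_ne_zero
  have hsymm : ∀ v w, fderiv ℝ (fderiv ℝ (W k)) z v w =
      fderiv ℝ (fderiv ℝ (W k)) z w v := by
    intro v w
    exact second_derivative_symmetric_of_eventually
      (Filter.eventually_of_mem hzU fun y hy => (hWd k y hy).hasFDerivAt)
      hW'd.hasFDerivAt v w
  -- key computation: value of the second derivative via the structure relations
  have key : ∀ a b : Fin n,
      fderiv ℝ (fderiv ℝ (W k)) z (e b) (e a) =
        (∑ c, fderiv ℝ (α a k c) z (e b) • e c) +
        ∑ c, (β a k c z • fderiv ℝ (W c) z (e b) +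
          fderiv ℝ (β a k c) z (e b) • W c z) := by
    intro a b
    have hαd : ∀ c, HasFDerivAt (α a k c) (fderiv ℝ (α a k c) z) z := fun c =>
      (((hα a k c).contDiffAt hzU).differentiableAt (by simp)).hasFDerivAt
    have hβd : ∀ c, HasFDerivAt (β a k c) (fderiv ℝ (β a k c) z) z := fun c =>
      (((hβ a k c).contDiffAt hzU).differentiableAt (by simp)).hasFDerivAt
    have hWdz : ∀ c, HasFDerivAt (W c) (fderiv ℝ (W c) z) z := fun c =>
      (hWd c z hz).hasFDerivAt
    have hR : HasFDerivAt (fun y => (∑ c, α a k c y • e c) + ∑ c, β a k c y • W c y)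
        ((∑ c, (fderiv ℝ (α a k c) z).smulRight (e c)) +
         ∑ c, (β a k c z • fderiv ℝ (W c) z +
           (fderiv ℝ (β a k c) z).smulRight (W c z))) z :=
      (HasFDerivAt.fun_sum fun c _ => (hαd c).smul_const (e c)).add
        (HasFDerivAt.fun_sum fun c _ => (hβd c).smul (hWdz c))
    have hg : HasFDerivAt (fun y => fderiv ℝ (W k) y (e a))
        ((ContinuousLinearMap.apply ℝ ((Fin p → ℝ) × (Fin n → ℝ)) (e a)).comp
          (fderiv ℝ (fderiv ℝ (W k)) z)) z :=
      (ContinuousLinearMap.apply ℝ ((Fin p → ℝ) × (Fin n → ℝ)) (e a)).hasFDerivAt.comp z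
        hW'd.hasFDerivAt
    have hcongr : (fun y => fderiv ℝ (W k) y (e a)) =ᶠ[nhds z]
        (fun y => (∑ c, α a k c y • e c) + ∑ c, β a k c y • W c y) :=
      Filter.eventuallyEq_of_mem hzU fun y hy => hrel' a k y hy
    have hR' := hg.congr_of_eventuallyEq hcongr.symm
    have hLeq := hR'.unique hR
    have happ := congrArg
      (fun (L : ((Fin p → ℝ) × (Fin n → ℝ)) →L[ℝ] ((Fin p → ℝ) × (Fin n → ℝ))) => L (e b))
      hLeq
    simpa [ContinuousLinearMap.comp_apply, ContinuousLinearMap.apply_apply,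
      ContinuousLinearMap.sum_apply, ContinuousLinearMap.add_apply,
      ContinuousLinearMap.smulRight_apply, ContinuousLinearMap.smul_apply] using happ
  -- reorganize into coefficients of the basis (e, W)
  have reorg : ∀ a b : Fin n,
      (∑ c, fderiv ℝ (α a k c) z (e b) • e c) +
        ∑ c, (β a k c z • fderiv ℝ (W c) z (e b) +
          fderiv ℝ (β a k c) z (e b) • W c z)
      = (∑ c, (fderiv ℝ (α a k c) z (e b) + ∑ m', β a k m' z * α b m' c z) • e c) +
        ∑ c, (fderiv ℝ (β a k c) z (e b) + ∑ m', β a k m' z * β b m' c z) • W c z := by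
    intro a b
    have h2 : (∑ c, β a k c z • fderiv ℝ (W c) z (e b)) =
        (∑ c, (∑ m', β a k m' z * α b m' c z) • e c) +
        ∑ c, (∑ m', β a k m' z * β b m' c z) • W c z := by
      calc ∑ c, β a k c z • fderiv ℝ (W c) z (e b)
          = ∑ c, ((∑ m', (β a k c z * α b c m' z) • e m') +
                  ∑ m', (β a k c z * β b c m' z) • W m' z) := by
            refine Finset.sum_congr rfl fun c _ => ?_
            rw [hrel' b c z hz, smul_add, Finset.smul_sum, Finset.smul_sum]
            simp [smul_smul]
        _ = _ := by
            rw [Finset.sum_add_distrib, Finset.sum_comm,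
              Finset.sum_comm (γ := Fin n) (f := fun c m' => (β a k c z * β b c m' z) • W m' z)]
            simp [← Finset.sum_smul]
    rw [Finset.sum_add_distrib, h2]
    simp only [add_smul, Finset.sum_add_distrib]
    abel
  -- the difference of coefficients annihilates the independent family
  have main : ((∑ c, ((fderiv ℝ (α i k c) z (e j) + ∑ m', β i k m' z * α j m' c z) -
        (fderiv ℝ (α j k c) z (e i) + ∑ m', β j k m' z * α i m' c z)) • e c) +
      ∑ c, ((fderiv ℝ (β i k c) z (e j) + ∑ m', β i k m' z * β j m' c z) -
        (fderiv ℝ (β j k c) z (e i) + ∑ m', β j k m' z * β i m' c z)) • W c z) = 0 := by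
    have h1 := key i j
    have h2 := key j i
    rw [reorg i j] at h1
    rw [reorg j i] at h2
    have h3 : ((∑ c, (fderiv ℝ (α i k c) z (e j) + ∑ m', β i k m' z * α j m' c z) • e c) +
          ∑ c, (fderiv ℝ (β i k c) z (e j) + ∑ m', β i k m' z * β j m' c z) • W c z)
        = ((∑ c, (fderiv ℝ (α j k c) z (e i) + ∑ m', β j k m' z * α i m' c z) • e c) +
          ∑ c, (fderiv ℝ (β j k c) z (e i) + ∑ m', β j k m' z * β i m' c z) • W c z) := by
      rw [← h1, ← h2, hsymm]
    simp only [sub_smul, Finset.sum_sub_distrib]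
    rw [show ∀ A B C D : (Fin p → ℝ) × (Fin n → ℝ),
        A - B + (C - D) = (A + C) - (B + D) from fun A B C D => by abel]
    rw [h3, sub_self]
  have hcoef := Fintype.linearIndependent_iff.1 (hli z hz)
    (Sum.elim
      (fun c => (fderiv ℝ (α i k c) z (e j) + ∑ m', β i k m' z * α j m' c z) -
        (fderiv ℝ (α j k c) z (e i) + ∑ m', β j k m' z * α i m' c z))
      (fun c => (fderiv ℝ (β i k c) z (e j) + ∑ m', β i k m' z * β j m' c z) -
        (fderiv ℝ (β j k c) z (e i) + ∑ m', β j k m' z * β i m' c z)))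
    (by rw [Fintype.sum_sum_type]; simpa using main) (Sum.inr l)
  simp only [Sum.elim_inr] at hcoef
  have e1 : ∑ m', β i m' l z * β j k m' z = ∑ m', β j k m' z * β i m' l z := by
    exact Finset.sum_congr rfl fun m' _ => mul_comm _ _
  have e2 : ∑ m', β j m' l z * β i k m' z = ∑ m', β i k m' z * β j m' l z := by
    exact Finset.sum_congr rfl fun m' _ => mul_comm _ _
  rw [Finset.sum_sub_distrib, e1, e2]
  linarith [hcoef]
end

section
/- Identify ℝ^m with ℝ^{m−n} × ℝ^n and let e_1, …, e_n be the constant vector fields given by the standard basis vectors of the second factor. Let U ⊆ ℝ^m be open, let F be a smooth vector field on U, set W_i := [F, e_i], and assume: (a) the 2n vectors e_1(z), …, e_n(z), W_1(z), …, W_n(z) are linearly independent at every z ∈ U; (b) the span 𝒲_z := span{e_1(z), …, e_n(z), W_1(z), …, W_n(z)} is involutive in the sense that [e_i, W_j](z) ∈ 𝒲_z and [W_i, W_j](z) ∈ 𝒲_z for all z ∈ U and all i, j. Then for every z₀ ∈ U there exist an open neighbourhood U' ⊆ U of z₀ and a smooth map A : U' → (n×n real matrices) with A(z) invertible for all z ∈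 U', such that the vector fields Ṽ_i := A_i^j e_j satisfy [Ṽ_i, Ṽ_j] = 0 on U' and [Ṽ_i, [F, Ṽ_j]](z) ∈ span{e_1(z), …, e_n(z)} for all z ∈ U' and all i, j. -/
lemma sum_smul_eVec {p n : ℕ} (c : Fin n → ℝ) :
    ∑ k, c k • eVec p n k = ((0 : Fin p → ℝ), c) := by
  have h : ∀ k, c k • eVec p n k = ((0 : Fin p → ℝ), Pi.single k (c k)) := by
    intro k
    simp [eVec, Prod.ext_iff, ← Pi.single_smul]
  simp_rw [h]
  rw [Prod.ext_iff]
  constructor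
  · rw [Prod.fst_sum]; simp
  · rw [Prod.snd_sum]; simp [Finset.univ_sum_single]

lemma mem_span_eVec {p n : ℕ} (v : (Fin p → ℝ) × (Fin n → ℝ)) :
    v ∈ Submodule.span ℝ (Set.range fun k : Fin n => eVec p n k) ↔ v.1 = 0 := by
  constructor
  · intro hv
    have hle : Submodule.span ℝ (Set.range fun k : Fin n => eVec p n k) ≤
        (⊥ : Submodule ℝ (Fin p → ℝ)).prod ⊤ := by
      rw [Submodule.span_le]
      rintro x ⟨k, rfl⟩
      simp [eVec, Submodule.mem_prod]
    simpa [Submodule.mem_prod] using hle hv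
  · intro hv
    rw [Submodule.mem_span_range_iff_exists_fun]
    exact ⟨v.2, by rw [sum_smul_eVec]; exact Prod.ext hv.symm rfl⟩

lemma contDiffOn_finset_prod {X : Type*} [NormedAddCommGroup X] [NormedSpace ℝ X]
    {s : Set X} {ι : Type*} (t : Finset ι) (f : ι → X → ℝ)
    (h : ∀ i ∈ t, ContDiffOn ℝ (⊤ : ℕ∞) (f i) s) :
    ContDiffOn ℝ (⊤ : ℕ∞) (fun z => ∏ i ∈ t, f i z) s := by
  classical
  induction t using Finset.cons_induction with
  | empty => simpa using contDiffOn_const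
  | cons a t ha ih =>
    simp_rw [Finset.prod_cons]
    exact (h a (Finset.mem_cons_self a t)).mul
      (ih fun i hi => h i (Finset.mem_cons_of_mem hi))

lemma contDiffOn_matrix_det {X : Type*} [NormedAddCommGroup X] [NormedSpace ℝ X]
    {s : Set X} {n : ℕ} {M : X → Matrix (Fin n) (Fin n) ℝ}
    (h : ∀ i j, ContDiffOn ℝ (⊤ : ℕ∞) (fun z => M z i j) s) :
    ContDiffOn ℝ (⊤ : ℕ∞) (fun z => (M z).det) s := by
  simp_rw [Matrix.det_apply]
  apply ContDiffOn.sum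
  intro σ _
  have : ∀ z, (Equiv.Perm.sign σ • ∏ i, M z (σ i) i : ℝ)
      = ((Equiv.Perm.sign σ : ℤ) : ℝ) * ∏ i, M z (σ i) i := by
    intro z; rw [Units.smul_def, zsmul_eq_mul]
  simp_rw [this]
  exact contDiffOn_const.mul (contDiffOn_finset_prod _ _ fun i _ => h (σ i) i)

set_option maxHeartbeats 1000000 in
theorem stmt6 (p n : ℕ)
    (U : Set ((Fin p → ℝ) × (Fin n → ℝ))) (hU : IsOpen U)
    (F : ((Fin p → ℝ) × (Fin n → ℝ)) → (Fin p → ℝ) × (Fin n → ℝ))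
    (hF : ContDiffOn ℝ (⊤ : ℕ∞) F U)
    (W : Fin n → ((Fin p → ℝ) × (Fin n → ℝ)) → (Fin p → ℝ) × (Fin n → ℝ))
    (hW : ∀ i, W i = lieB F (fun _ => eVec p n i))
    (hli : ∀ z ∈ U, LinearIndependent ℝ
      (Sum.elim (fun i : Fin n => eVec p n i) (fun i : Fin n => W i z)))
    (hinv₁ : ∀ z ∈ U, ∀ i j, lieB (fun _ => eVec p n i) (W j) z ∈
      Submodule.span ℝ (Set.range (Sum.elim (fun k : Fin n => eVec p n k)
        (fun k : Fin n => W k z))))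
    (hinv₂ : ∀ z ∈ U, ∀ i j, lieB (W i) (W j) z ∈
      Submodule.span ℝ (Set.range (Sum.elim (fun k : Fin n => eVec p n k)
        (fun k : Fin n => W k z)))) :
    ∀ z₀ ∈ U, ∃ U' : Set ((Fin p → ℝ) × (Fin n → ℝ)), U' ⊆ U ∧ IsOpen U' ∧ z₀ ∈ U' ∧
      ∃ A : ((Fin p → ℝ) × (Fin n → ℝ)) → Fin n → Fin n → ℝ,
        ContDiffOn ℝ (⊤ : ℕ∞) A U' ∧
        (∀ z ∈ U', IsUnit (Matrix.of (A z))) ∧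
        (∀ i j, ∀ z ∈ U',
          lieB (fun w => ∑ k, A w i k • eVec p n k)
               (fun w => ∑ k, A w j k • eVec p n k) z = 0) ∧
        (∀ i j, ∀ z ∈ U',
          lieB (fun w => ∑ k, A w i k • eVec p n k)
               (lieB F (fun w => ∑ k, A w j k • eVec p n k)) z ∈
            Submodule.span ℝ (Set.range fun k : Fin n => eVec p n k)) := by
  intro z₀ hz₀
  classical
  set e : Fin n → (Fin p → ℝ) × (Fin n → ℝ) := fun i => eVec p n i with he
  -- W is minus the derivative of F in the e-directions
  have hWdef : ∀ i z, W i z = -(fderiv ℝ F z (e i)) := by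
    intro i z
    rw [hW i]
    simp [lieB, he]
  set wv : Fin n → ((Fin p → ℝ) × (Fin n → ℝ)) → (Fin p → ℝ) := fun k z => (W k z).1 with hwv
  -- smoothness of fderiv F on U
  have hF' : ContDiffOn ℝ (⊤ : ℕ∞) (fderiv ℝ F) U := by
    exact hF.fderiv_of_isOpen hU (by norm_num)
  have hWsm : ∀ k, ContDiffOn ℝ (⊤ : ℕ∞) (W k) U := by
    intro k
    have : W k = fun z => -(fderiv ℝ F z (e k)) := funext fun z => hWdef k z
    rw [this]
    exact (hF'.clm_apply contDiffOn_const).neg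
  have hwsm : ∀ k, ContDiffOn ℝ (⊤ : ℕ∞) (wv k) U := fun k => (hWsm k).fst
  -- linear independence of the wv's at every point of U
  have hwli : ∀ z ∈ U, ∀ c : Fin n → ℝ, ∑ k, c k • wv k z = 0 → ∀ k, c k = 0 := by
    intro z hz c hc k
    set v : (Fin p → ℝ) × (Fin n → ℝ) := ∑ m, c m • W m z with hv
    have hv1 : v.1 = 0 := by
      rw [hv, Prod.fst_sum]
      simpa using hc
    have key := Fintype.linearIndependent_iff.1 (hli z hz)
      (Sum.elim (fun m => v.2 m) (fun m => -c m))
    have hzero : ∑ s : Fin n ⊕ Fin n,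
        (Sum.elim (fun m => v.2 m) (fun m => -c m)) s •
          (Sum.elim e fun m => W m z) s = 0 := by
      rw [Fintype.sum_sum_type]
      simp only [Sum.elim_inl, Sum.elim_inr]
      have h1 : ∑ m, v.2 m • e m = v := by
        rw [he, sum_smul_eVec]
        exact Prod.ext_iff.2 ⟨hv1.symm, rfl⟩
      have h2 : ∑ m, (-c m) • W m z = -v := by
        rw [hv, ← Finset.sum_neg_distrib]
        exact Finset.sum_congr rfl fun m _ => by rw [neg_smul]
      rw [h1, h2, add_neg_cancel]
    have := key hzero (Sum.inr k)
    simpa using this.symm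
  -- a left inverse for the frame at z₀
  set φ : (Fin n → ℝ) →ₗ[ℝ] (Fin p → ℝ) :=
    { toFun := fun c => ∑ k, c k • wv k z₀
      map_add' := by
        intro a b
        simp_rw [Pi.add_apply, add_smul]
        rw [Finset.sum_add_distrib]
      map_smul' := by
        intro r a
        simp_rw [Pi.smul_apply, smul_eq_mul, RingHom.id_apply, Finset.smul_sum, ← smul_smul] } with hφ
  have hφapp : ∀ c, φ c = ∑ k, c k • wv k z₀ := fun c => rfl
  have hφsingle : ∀ k, φ (Pi.single k 1) = wv k z₀ := by
    intro k
    rw [hφapp]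
    rw [Finset.sum_eq_single k]
    · simp
    · intro m _ hm; simp [Pi.single_apply, hm]
    · intro h; exact absurd (Finset.mem_univ k) h
  have hker : LinearMap.ker φ = ⊥ := by
    rw [LinearMap.ker_eq_bot']
    intro c hc
    funext k
    exact hwli z₀ hz₀ c hc k
  obtain ⟨L, hL⟩ := φ.exists_leftInverse_of_injective hker
  have hLw : ∀ k, L (wv k z₀) = Pi.single k 1 := by
    intro k
    rw [← hφsingle k, ← LinearMap.comp_apply, hL, LinearMap.id_apply]
  -- the matrix N and its determinant
  set N : ((Fin p → ℝ) × (Fin n → ℝ)) → Matrix (Fin n) (Fin n) ℝ :=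
    fun z => Matrix.of fun k m => L (wv k z) m with hN
  have hNsm : ∀ k m, ContDiffOn ℝ (⊤ : ℕ∞) (fun z => N z k m) U := by
    intro k m
    have hL' : ContDiffOn ℝ (⊤ : ℕ∞) (fun z => L (wv k z)) U := by
      have : (fun z => L (wv k z)) =
          (LinearMap.toContinuousLinearMap L : (Fin p → ℝ) →L[ℝ] (Fin n → ℝ)) ∘ (wv k) := rfl
      rw [this]
      exact (LinearMap.toContinuousLinearMap L).contDiff.comp_contDiffOn (hwsm k)
    exact (contDiffOn_pi.1 hL') m
  have hNz₀ : N z₀ = 1 := by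
    ext k m
    rw [hN]
    simp only [Matrix.of_apply, hLw k]
    rw [Matrix.one_apply, Pi.single_apply]
    by_cases h : k = m <;> simp [h, Ne.symm, eq_comm]
  set d : ((Fin p → ℝ) × (Fin n → ℝ)) → ℝ := fun z => (N z).det with hd
  have hdsm : ContDiffOn ℝ (⊤ : ℕ∞) d U := contDiffOn_matrix_det hNsm
  -- the neighbourhood U'
  set U' : Set ((Fin p → ℝ) × (Fin n → ℝ)) := U ∩ d ⁻¹' ({0}ᶜ) with hU'
  have hU'sub : U' ⊆ U := Set.inter_subset_left
  have hU'open : IsOpen U' :=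
    ContinuousOn.isOpen_inter_preimage (hdsm.continuousOn) hU (isOpen_compl_singleton)
  have hz₀U' : z₀ ∈ U' := by
    constructor
    · exact hz₀
    · simp [hd, hNz₀]
  have hdne : ∀ z ∈ U', d z ≠ 0 := fun z hz => hz.2
  have hdunit : ∀ z ∈ U', IsUnit (N z).det := fun z hz => isUnit_iff_ne_zero.2 (hdne z hz)
  -- the matrix A = N⁻¹
  set A : ((Fin p → ℝ) × (Fin n → ℝ)) → Fin n → Fin n → ℝ :=
    fun z j k => (N z)⁻¹ j k with hA
  have hAentry : ∀ z j k, A z j k = (d z)⁻¹ * (N z).adjugate j k := by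
    intro z j k
    rw [hA]
    simp only [Matrix.inv_def, Matrix.smul_apply, smul_eq_mul, Ring.inverse_eq_inv']
    rfl
  have hadjsm : ∀ j k, ContDiffOn ℝ (⊤ : ℕ∞) (fun z => (N z).adjugate j k) U := by
    intro j k
    simp_rw [Matrix.adjugate_apply]
    apply contDiffOn_matrix_det
    intro a b
    by_cases h : a = k
    · subst h
      simp_rw [Matrix.updateRow_self]
      exact contDiffOn_const
    · simp_rw [Matrix.updateRow_ne h]
      exact hNsm a b
  have hAsm : ContDiffOn ℝ (⊤ : ℕ∞) A U' := by
    rw [contDiffOn_pi]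
    intro j
    rw [contDiffOn_pi]
    intro k
    have : (fun z => A z j k) = fun z => (d z)⁻¹ * (N z).adjugate j k :=
      funext fun z => hAentry z j k
    rw [this]
    exact ((hdsm.mono hU'sub).inv hdne).mul ((hadjsm j k).mono hU'sub)
  have hAunit : ∀ z ∈ U', IsUnit (Matrix.of (A z)) := by
    intro z hz
    have : Matrix.of (A z) = (N z)⁻¹ := rfl
    rw [this, Matrix.isUnit_iff_isUnit_det, Matrix.det_nonsing_inv]
    rw [Ring.inverse_eq_inv']
    exact isUnit_iff_ne_zero.2 (inv_ne_zero (hdne z hz))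
  have hAN : ∀ z ∈ U', ∀ j m, ∑ k, A z j k * N z k m = if j = m then (1:ℝ) else 0 := by
    intro z hz j m
    have h := Matrix.nonsing_inv_mul (N z) (hdunit z hz)
    calc ∑ k, A z j k * N z k m = ((N z)⁻¹ * N z) j m := (Matrix.mul_apply).symm
      _ = (1 : Matrix (Fin n) (Fin n) ℝ) j m := by rw [h]
      _ = if j = m then (1:ℝ) else 0 := Matrix.one_apply
  -- the normalized frame g
  set g : Fin n → ((Fin p → ℝ) × (Fin n → ℝ)) → (Fin p → ℝ) :=
    fun j z => ∑ k, A z j k • wv k z with hg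
  have hLg : ∀ j, ∀ z ∈ U', L (g j z) = Pi.single j 1 := by
    intro j z hz
    rw [hg]
    simp only
    rw [map_sum]
    funext m
    rw [Finset.sum_apply]
    simp_rw [map_smul, Pi.smul_apply, smul_eq_mul]
    have : ∀ k, L (wv k z) m = N z k m := fun k => rfl
    simp_rw [this]
    rw [hAN z hz j m, Pi.single_apply]
    by_cases h : j = m <;> simp [h, eq_comm]
  -- differentiability helpers
  have hdiffA : ∀ z ∈ U', ∀ j k, DifferentiableAt ℝ (fun w => A w j k) z := by
    intro z hz j k
    have h1 : ContDiffOn ℝ (⊤ : ℕ∞) (fun w => A w j k) U' :=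
      (contDiffOn_pi.1 ((contDiffOn_pi.1 hAsm) j)) k
    exact ((h1.contDiffAt (hU'open.mem_nhds hz)).differentiableAt (by norm_num))
  have hdiffArow : ∀ z ∈ U', ∀ j, DifferentiableAt ℝ (fun w => A w j) z := by
    intro z hz j
    exact differentiableAt_pi.2 fun k => hdiffA z hz j k
  have hdiffw : ∀ z ∈ U, ∀ k, DifferentiableAt ℝ (wv k) z := by
    intro z hz k
    exact ((hwsm k).contDiffAt (hU.mem_nhds hz)).differentiableAt (by norm_num)
  have hdiffW : ∀ z ∈ U, ∀ k, DifferentiableAt ℝ (W k) z := by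
    intro z hz k
    exact ((hWsm k).contDiffAt (hU.mem_nhds hz)).differentiableAt (by norm_num)
  have hdiffg : ∀ z ∈ U', ∀ j, DifferentiableAt ℝ (g j) z := by
    intro z hz j
    rw [hg]
    exact DifferentiableAt.fun_sum fun k _ =>
      ((hdiffA z hz j k).smul (hdiffw z (hU'sub hz) k))
  -- first components of derivatives of W: chain rule through fst
  have hfstW : ∀ z ∈ U, ∀ k, fderiv ℝ (wv k) z =
      (ContinuousLinearMap.fst ℝ (Fin p → ℝ) (Fin n → ℝ)).comp (fderiv ℝ (W k) z) := by
    intro z hz k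
    have h : HasFDerivAt (wv k)
        ((ContinuousLinearMap.fst ℝ (Fin p → ℝ) (Fin n → ℝ)).comp (fderiv ℝ (W k) z)) z :=
      (ContinuousLinearMap.fst ℝ (Fin p → ℝ) (Fin n → ℝ)).hasFDerivAt.comp z
        (hdiffW z hz k).hasFDerivAt
    exact h.fderiv
  -- involutivity: directional derivatives of wv along e stay in the span of the wv's
  have hDw : ∀ z ∈ U, ∀ k l, fderiv ℝ (wv k) z (e l) ∈
      Submodule.span ℝ (Set.range fun m => wv m z) := by
    intro z hz k l
    have hmem := hinv₁ z hz l k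
    have heq : lieB (fun _ => eVec p n l) (W k) z = fderiv ℝ (W k) z (e l) := by
      simp [lieB, he]
    rw [heq] at hmem
    set π : ((Fin p → ℝ) × (Fin n → ℝ)) →ₗ[ℝ] (Fin p → ℝ) :=
      LinearMap.fst ℝ (Fin p → ℝ) (Fin n → ℝ) with hπ
    have h1 : π (fderiv ℝ (W k) z (e l)) ∈
        Submodule.map π (Submodule.span ℝ (Set.range (Sum.elim (fun k : Fin n => eVec p n k)
          (fun k : Fin n => W k z)))) := Submodule.mem_map_of_mem hmem
    rw [Submodule.map_span] at h1
    have h2 : Submodule.span ℝ (π '' Set.range (Sum.elim (fun k : Fin n => eVec p n k)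
        (fun k : Fin n => W k z))) ≤ Submodule.span ℝ (Set.range fun m => wv m z) := by
      rw [Submodule.span_le]
      rintro y ⟨x, ⟨s, rfl⟩, rfl⟩
      cases s with
      | inl i =>
        have : π (Sum.elim (fun k : Fin n => eVec p n k) (fun k : Fin n => W k z) (Sum.inl i))
            = 0 := by simp [hπ, eVec]
        rw [this]
        exact Submodule.zero_mem _
      | inr m =>
        have : π (Sum.elim (fun k : Fin n => eVec p n k) (fun k : Fin n => W k z) (Sum.inr m))
            = wv m z := by simp [hπ, hwv]
        rw [this]
        exact Submodule.subset_span ⟨m, rfl⟩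
    have h3 := h2 h1
    have h4 : π (fderiv ℝ (W k) z (e l)) = fderiv ℝ (wv k) z (e l) := by
      rw [hfstW z hz k]
      rfl
    rwa [h4] at h3
  -- Clairaut: symmetry of mixed second derivatives of F
  have hclair : ∀ z ∈ U, ∀ k l, fderiv ℝ (wv k) z (e l) = fderiv ℝ (wv l) z (e k) := by
    intro z hz k l
    set Φ := fderiv ℝ F with hΦ
    have hΦdiff : DifferentiableAt ℝ Φ z :=
      ((hF'.contDiffAt (hU.mem_nhds hz)).differentiableAt (by norm_num))
    have hev : ∀ᶠ y in nhds z, HasFDerivAt F (Φ y) y := by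
      filter_upwards [hU.mem_nhds hz] with y hy
      exact ((hF.contDiffAt (hU.mem_nhds hy)).differentiableAt (by norm_num)).hasFDerivAt
    have hsymm := second_derivative_symmetric_of_eventually hev hΦdiff.hasFDerivAt
    set Ψ : Fin n → (((Fin p → ℝ) × (Fin n → ℝ)) →L[ℝ] ((Fin p → ℝ) × (Fin n → ℝ)))
        →L[ℝ] (Fin p → ℝ) := fun k =>
      -((ContinuousLinearMap.fst ℝ (Fin p → ℝ) (Fin n → ℝ)).comp
        (ContinuousLinearMap.apply ℝ ((Fin p → ℝ) × (Fin n → ℝ)) (e k))) with hΨ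
    have hwkeq : ∀ k, wv k = fun w => Ψ k (Φ w) := by
      intro k
      funext w
      rw [hwv]
      simp only [hΨ, ContinuousLinearMap.neg_apply, ContinuousLinearMap.comp_apply,
        ContinuousLinearMap.apply_apply, ContinuousLinearMap.coe_fst']
      rw [hWdef k w]
      rfl
    have hder : ∀ k, fderiv ℝ (wv k) z = (Ψ k).comp (fderiv ℝ Φ z) := by
      intro k
      rw [hwkeq k]
      exact ((Ψ k).hasFDerivAt.comp z hΦdiff.hasFDerivAt).fderiv
    rw [hder k, hder l]
    simp only [ContinuousLinearMap.comp_apply, hΨ, ContinuousLinearMap.neg_apply,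
      ContinuousLinearMap.apply_apply, ContinuousLinearMap.coe_fst',
      ContinuousLinearMap.coe_comp', Function.comp_apply]
    rw [hsymm (e l) (e k)]
  -- derivative of g via the product rule
  have hgder : ∀ z ∈ U', ∀ j, HasFDerivAt (g j)
      (∑ k, (A z j k • fderiv ℝ (wv k) z +
        (fderiv ℝ (fun w => A w j k) z).smulRight (wv k z))) z := by
    intro z hz j
    rw [hg]
    exact HasFDerivAt.fun_sum fun k _ =>
      ((hdiffA z hz j k).hasFDerivAt.smul (hdiffw z (hU'sub hz) k).hasFDerivAt)
  -- decompose (0, u) in the e-basis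
  have hvsum : ∀ u : Fin n → ℝ, ((0 : Fin p → ℝ), u) = ∑ l, u l • e l := by
    intro u
    rw [he, sum_smul_eVec]
  -- derivative of wv in vertical directions stays in the span
  have hDw' : ∀ z ∈ U, ∀ k, ∀ u : Fin n → ℝ, fderiv ℝ (wv k) z ((0 : Fin p → ℝ), u) ∈
      Submodule.span ℝ (Set.range fun m => wv m z) := by
    intro z hz k u
    rw [hvsum u, map_sum]
    exact Submodule.sum_mem _ fun l _ => by
      rw [ContinuousLinearMap.map_smul]
      exact Submodule.smul_mem _ _ (hDw z hz k l)
  have hNapp : ∀ z k m, N z k m = L (wv k z) m := fun _ _ _ => rfl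
  have hgval : ∀ j z, g j z = ∑ k, A z j k • wv k z := fun _ _ => rfl
  clear_value g A N d
  -- L kills the derivative of g
  have hLker : ∀ z ∈ U', ∀ j, ∀ v, L (fderiv ℝ (g j) z v) = 0 := by
    intro z hz j v
    set Lc : (Fin p → ℝ) →L[ℝ] (Fin n → ℝ) := LinearMap.toContinuousLinearMap L with hLc
    have hLcapp : ∀ x, Lc x = L x := fun x => rfl
    have hchain : HasFDerivAt (fun w => Lc (g j w)) (Lc.comp (fderiv ℝ (g j) z)) z :=
      Lc.hasFDerivAt.comp z (hdiffg z hz j).hasFDerivAt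
    have hconst : (fun w => Lc (g j w)) =ᶠ[nhds z] fun _ => Pi.single j 1 := by
      filter_upwards [hU'open.mem_nhds hz] with w hw
      rw [hLcapp, hLg j w hw]
    have h0 : fderiv ℝ (fun w => Lc (g j w)) z = 0 := by
      rw [hconst.fderiv_eq]
      exact fderiv_const_apply _
    have := hchain.fderiv
    rw [h0] at this
    have happ := DFunLike.congr_fun this v
    calc L (fderiv ℝ (g j) z v) = (Lc.comp (fderiv ℝ (g j) z)) v := rfl
      _ = (0 : ((Fin p → ℝ) × (Fin n → ℝ)) →L[ℝ] (Fin n → ℝ)) v := happ.symm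
      _ = 0 := ContinuousLinearMap.zero_apply v
  -- vanishing of vertical derivatives of g
  have hgvan : ∀ j, ∀ z ∈ U', ∀ u : Fin n → ℝ,
      fderiv ℝ (g j) z ((0 : Fin p → ℝ), u) = 0 := by
    intro j z hz u
    set T := fderiv ℝ (g j) z ((0 : Fin p → ℝ), u) with hT
    have hmem : T ∈ Submodule.span ℝ (Set.range fun m => wv m z) := by
      rw [hT, (hgder z hz j).fderiv]
      rw [ContinuousLinearMap.sum_apply]
      refine Submodule.sum_mem _ fun k _ => ?_
      rw [ContinuousLinearMap.add_apply, ContinuousLinearMap.smul_apply,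
        ContinuousLinearMap.smulRight_apply]
      exact Submodule.add_mem _
        (Submodule.smul_mem _ _ (hDw' z (hU'sub hz) k u))
        (Submodule.smul_mem _ _ (Submodule.subset_span ⟨k, rfl⟩))
    obtain ⟨c, hc⟩ := (Submodule.mem_span_range_iff_exists_fun ℝ).1 hmem
    have hLT : L T = 0 := hLker z hz j _
    have hcN : ∀ m', ∑ m, c m * N z m m' = 0 := by
      intro m'
      have : L T = ∑ m, c m • L (wv m z) := by
        rw [← hc, map_sum]
        exact Finset.sum_congr rfl fun m _ => by rw [map_smul]
      rw [hLT] at this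
      have h2 := congrFun this.symm m'
      rw [Finset.sum_apply] at h2
      simp only [Pi.smul_apply, smul_eq_mul] at h2
      calc ∑ m, c m * N z m m' = ∑ m, c m * L (wv m z) m' := by simp_rw [hNapp]
        _ = 0 := h2
    have hc0 : c = 0 := by
      have hvm : Matrix.vecMul c (N z) = 0 := by
        funext m'
        simpa [Matrix.vecMul, dotProduct] using hcN m'
      have h1 : c = Matrix.vecMul c ((N z) * (N z)⁻¹) := by
        rw [Matrix.mul_nonsing_inv _ (hdunit z hz), Matrix.vecMul_one]
      rw [← Matrix.vecMul_vecMul, hvm, Matrix.zero_vecMul] at h1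
      exact h1
    rw [← hc, hc0]
    simp
  -- applied form of the product rule
  have hgapp : ∀ z ∈ U', ∀ j, ∀ v : (Fin p → ℝ) × (Fin n → ℝ), fderiv ℝ (g j) z v
      = ∑ k, (A z j k • fderiv ℝ (wv k) z v +
          (fderiv ℝ (fun w => A w j k) z v) • wv k z) := by
    intro z hz j v
    rw [(hgder z hz j).fderiv, ContinuousLinearMap.sum_apply]
    refine Finset.sum_congr rfl fun k _ => ?_
    rw [ContinuousLinearMap.add_apply, ContinuousLinearMap.smul_apply,
      ContinuousLinearMap.smulRight_apply]
  -- expansion of vertical derivatives of wv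
  have hDwexp : ∀ z ∈ U, ∀ k, ∀ u : Fin n → ℝ,
      fderiv ℝ (wv k) z ((0 : Fin p → ℝ), u) = ∑ l, u l • fderiv ℝ (wv k) z (e l) := by
    intro z hz k u
    rw [hvsum u, map_sum]
    exact Finset.sum_congr rfl fun l _ => ContinuousLinearMap.map_smul _ _ _
  -- symmetry of the A-derivatives
  have hsym : ∀ z ∈ U', ∀ i j k,
      fderiv ℝ (fun w => A w j k) z ((0 : Fin p → ℝ), A z i)
        = fderiv ℝ (fun w => A w i k) z ((0 : Fin p → ℝ), A z j) := by
    intro z hz i j k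
    have h0j := hgvan j z hz (A z i)
    have h0i := hgvan i z hz (A z j)
    rw [hgapp z hz j] at h0j
    rw [hgapp z hz i] at h0i
    rw [Finset.sum_add_distrib] at h0j h0i
    have key : ∀ a b : Fin n, ∑ k', A z a k' • fderiv ℝ (wv k') z ((0 : Fin p → ℝ), A z b)
        = ∑ k', ∑ l, (A z a k' * A z b l) • fderiv ℝ (wv k') z (e l) := by
      intro a b
      refine Finset.sum_congr rfl fun k' _ => ?_
      rw [hDwexp z (hU'sub hz) k' (A z b), Finset.smul_sum]
      exact Finset.sum_congr rfl fun l _ => by rw [smul_smul]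
    have hsymS : (∑ k', A z j k' • fderiv ℝ (wv k') z ((0 : Fin p → ℝ), A z i))
        = ∑ k', A z i k' • fderiv ℝ (wv k') z ((0 : Fin p → ℝ), A z j) := by
      rw [key j i, key i j]
      calc ∑ k', ∑ l, (A z j k' * A z i l) • fderiv ℝ (wv k') z (e l)
          = ∑ k', ∑ l, (A z j k' * A z i l) • fderiv ℝ (wv l) z (e k') := by
            exact Finset.sum_congr rfl fun k' _ => Finset.sum_congr rfl fun l _ => by
              rw [hclair z (hU'sub hz) k' l]
        _ = ∑ l, ∑ k', (A z j k' * A z i l) • fderiv ℝ (wv l) z (e k') := Finset.sum_comm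
        _ = ∑ k', ∑ l, (A z i k' * A z j l) • fderiv ℝ (wv k') z (e l) := by
            exact Finset.sum_congr rfl fun l _ => Finset.sum_congr rfl fun k' _ => by
              rw [mul_comm]
    have hdiff : ∑ k', ((fderiv ℝ (fun w => A w j k') z ((0 : Fin p → ℝ), A z i))
        - (fderiv ℝ (fun w => A w i k') z ((0 : Fin p → ℝ), A z j))) • wv k' z = 0 := by
      simp_rw [sub_smul]
      rw [Finset.sum_sub_distrib]
      have e1 : ∑ k', (fderiv ℝ (fun w => A w j k') z ((0 : Fin p → ℝ), A z i)) • wv k' z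
          = -(∑ k', A z j k' • fderiv ℝ (wv k') z ((0 : Fin p → ℝ), A z i)) :=
        eq_neg_of_add_eq_zero_right (by rw [add_comm]; rw [add_comm] at h0j; exact h0j)
      have e2 : ∑ k', (fderiv ℝ (fun w => A w i k') z ((0 : Fin p → ℝ), A z j)) • wv k' z
          = -(∑ k', A z i k' • fderiv ℝ (wv k') z ((0 : Fin p → ℝ), A z j)) :=
        eq_neg_of_add_eq_zero_right (by rw [add_comm]; rw [add_comm] at h0i; exact h0i)
      rw [e1, e2, hsymS]
      exact sub_self _
    have := hwli z (hU'sub hz) _ hdiff k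
    exact sub_eq_zero.1 this
  -- the vector fields as pair-valued maps
  have hVeq : ∀ i, (fun w => ∑ k, A w i k • eVec p n k)
      = fun w => (((0 : Fin p → ℝ), A w i) : (Fin p → ℝ) × (Fin n → ℝ)) := by
    intro i
    funext w
    rw [sum_smul_eVec]
  have hVder : ∀ z ∈ U', ∀ i, HasFDerivAt
      (fun w => (((0 : Fin p → ℝ), A w i) : (Fin p → ℝ) × (Fin n → ℝ)))
      ((0 : ((Fin p → ℝ) × (Fin n → ℝ)) →L[ℝ] (Fin p → ℝ)).prod
        (fderiv ℝ (fun w => A w i) z)) z := by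
    intro z hz i
    exact (hasFDerivAt_const _ _).prodMk (hdiffArow z hz i).hasFDerivAt
  have hrowpi : ∀ z ∈ U', ∀ i, fderiv ℝ (fun w => A w i) z
      = ContinuousLinearMap.pi (fun k => fderiv ℝ (fun w => A w i k) z) := by
    intro z hz i
    exact fderiv_pi (fun k => hdiffA z hz i k)
  refine ⟨U', hU'sub, hU'open, hz₀U', A, hAsm, hAunit, ?_, ?_⟩
  · -- commuting brackets
    intro i j z hz
    rw [hVeq i, hVeq j]
    simp only [lieB]
    rw [(hVder z hz j).fderiv, (hVder z hz i).fderiv]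
    rw [ContinuousLinearMap.prod_apply, ContinuousLinearMap.prod_apply]
    rw [Prod.mk_sub_mk]
    rw [Prod.mk_eq_zero]
    constructor
    · simp
    · rw [sub_eq_zero, hrowpi z hz j, hrowpi z hz i]
      funext k
      rw [ContinuousLinearMap.pi_apply, ContinuousLinearMap.pi_apply]
      exact hsym z hz i j k
  · -- the second bracket condition
    intro i j z hz
    rw [hVeq i, hVeq j]
    rw [mem_span_eVec]
    set Vj : ((Fin p → ℝ) × (Fin n → ℝ)) → (Fin p → ℝ) × (Fin n → ℝ) :=
      fun w => (((0 : Fin p → ℝ), A w j) : _) with hVj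
    set Vi : ((Fin p → ℝ) × (Fin n → ℝ)) → (Fin p → ℝ) × (Fin n → ℝ) :=
      fun w => (((0 : Fin p → ℝ), A w i) : _) with hVi
    set K : ((Fin p → ℝ) × (Fin n → ℝ)) → (Fin p → ℝ) × (Fin n → ℝ) :=
      fun w => (((0 : Fin p → ℝ), fderiv ℝ (fun w' => A w' j) w (F w)) : _)
        - fderiv ℝ F w ((0 : Fin p → ℝ), A w j) with hK
    -- lieB F Vj agrees with K on U'
    have hHK : ∀ w ∈ U', lieB F Vj w = K w := by
      intro w hw
      simp only [lieB, hK]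
      rw [(hVder w hw j).fderiv]
      rw [ContinuousLinearMap.prod_apply]
      rw [ContinuousLinearMap.zero_apply]
    have hev : lieB F Vj =ᶠ[nhds z] K :=
      Filter.eventuallyEq_of_mem (hU'open.mem_nhds hz) hHK
    have hfd : fderiv ℝ (lieB F Vj) z = fderiv ℝ K z := hev.fderiv_eq
    -- K is differentiable at z
    have hK1 : DifferentiableAt ℝ
        (fun w => (((0 : Fin p → ℝ), fderiv ℝ (fun w' => A w' j) w (F w)) : _)) z := by
      apply DifferentiableAt.prodMk (differentiableAt_const _)
      have hrow : ContDiffOn ℝ (⊤ : ℕ∞) (fun w => A w j) U' := (contDiffOn_pi.1 hAsm) j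
      have hrow' : ContDiffOn ℝ (⊤ : ℕ∞) (fderiv ℝ (fun w => A w j)) U' :=
        hrow.fderiv_of_isOpen hU'open (by norm_num)
      have := hrow'.clm_apply (hF.mono hU'sub)
      exact ((this.contDiffAt (hU'open.mem_nhds hz)).differentiableAt (by norm_num))
    have hK2 : DifferentiableAt ℝ
        (fun w => fderiv ℝ F w ((0 : Fin p → ℝ), A w j)) z := by
      have hpair : ContDiffOn ℝ (⊤ : ℕ∞)
          (fun w => (((0 : Fin p → ℝ), A w j) : (Fin p → ℝ) × (Fin n → ℝ))) U' :=
        contDiffOn_const.prodMk ((contDiffOn_pi.1 hAsm) j)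
      have := (hF'.mono hU'sub).clm_apply hpair
      exact ((this.contDiffAt (hU'open.mem_nhds hz)).differentiableAt (by norm_num))
    have hKdiff : DifferentiableAt ℝ K z := by
      rw [hK]
      exact hK1.sub hK2
    -- first component of K is g j
    have hKfst : (fun w => (K w).1) = g j := by
      funext w
      rw [hK]
      simp only [Prod.fst_sub]
      have h1 : fderiv ℝ F w ((0 : Fin p → ℝ), A w j)
          = ∑ k, A w j k • fderiv ℝ F w (e k) := by
        rw [hvsum (A w j), map_sum]
        exact Finset.sum_congr rfl fun k _ => ContinuousLinearMap.map_smul _ _ _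
      have h2 : ∀ k, fderiv ℝ F w (e k) = -(W k w) := by
        intro k
        rw [hWdef k w, neg_neg]
      rw [h1]
      simp_rw [h2]
      rw [hgval j w, Prod.fst_sum]
      simp only [Prod.smul_fst, Prod.fst_neg, smul_neg, Finset.sum_neg_distrib, zero_sub,
        neg_neg]
      rfl
    -- chain rule through fst for K
    have hKfd : fderiv ℝ (fun w => (K w).1) z
        = (ContinuousLinearMap.fst ℝ (Fin p → ℝ) (Fin n → ℝ)).comp (fderiv ℝ K z) :=
      ((ContinuousLinearMap.fst ℝ (Fin p → ℝ) (Fin n → ℝ)).hasFDerivAt.comp z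
        hKdiff.hasFDerivAt).fderiv
    -- now compute the first component of the bracket
    simp only [lieB]
    rw [Prod.fst_sub]
    have hterm2 : ∀ x, ((fderiv ℝ Vi z) x).1 = 0 := by
      intro x
      rw [hVi, (hVder z hz i).fderiv, ContinuousLinearMap.prod_apply]
      rfl
    have hterm1 : (fderiv ℝ (lieB F Vj) z (Vi z)).1 = 0 := by
      rw [hfd]
      have : (fderiv ℝ K z (Vi z)).1
          = fderiv ℝ (fun w => (K w).1) z (Vi z) := by
        rw [hKfd]
        rfl
      rw [this, hKfst]
      have hViz : Vi z = ((0 : Fin p → ℝ), A z i) := rfl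
      rw [hViz]
      rw [hgvan j z hz (A z i)]
    rw [hterm1, hterm2 _]
    simp
end

section
/- Identify ℝ^m with ℝ^{m−n} × ℝ^n and let e_1, …, e_n be the constant vector fields given by the standard basis vectors of the second factor. Let U ⊆ ℝ^m be open, let F be a smooth vector field on U, set W_i := [F, e_i], and assume: (a) the 2n vectors e_1(z), …, e_n(z), W_1(z), …, W_n(z) are linearly independent at every z ∈ U; (b) [e_i, W_j](z) ∈ span{e_1(z), …, e_n(z)} for all z ∈ U and all i, j. Suppose F = a^i e_i + b^i W_i on U, where a^i, b^i : U → ℝ are smooth. Then ∂b^j/∂y^i = −δ^j_i on U for all i, j, where ∂/∂y^i denotes the partial derivative along e_i and δ^j_i is the Kronecker delta. -/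
theorem stmt10 (p n : ℕ)
    (U : Set ((Fin p → ℝ) × (Fin n → ℝ))) (hU : IsOpen U)
    (F : ((Fin p → ℝ) × (Fin n → ℝ)) → (Fin p → ℝ) × (Fin n → ℝ))
    (hF : ContDiffOn ℝ (⊤ : ℕ∞) F U)
    (W : Fin n → ((Fin p → ℝ) × (Fin n → ℝ)) → (Fin p → ℝ) × (Fin n → ℝ))
    (hW : ∀ i, W i = lieB F (fun _ => eVec p n i))
    (hli : ∀ z ∈ U, LinearIndependent ℝ
      (Sum.elim (fun i : Fin n => eVec p n i) (fun i : Fin n => W i z)))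
    (hinv : ∀ z ∈ U, ∀ i j, lieB (fun _ => eVec p n i) (W j) z ∈
      Submodule.span ℝ (Set.range fun k : Fin n => eVec p n k))
    (a b : Fin n → ((Fin p → ℝ) × (Fin n → ℝ)) → ℝ)
    (ha : ∀ i, ContDiffOn ℝ (⊤ : ℕ∞) (a i) U)
    (hb : ∀ i, ContDiffOn ℝ (⊤ : ℕ∞) (b i) U)
    (hFab : ∀ z ∈ U, F z = (∑ i, a i z • eVec p n i) + ∑ i, b i z • W i z) :
    ∀ z ∈ U, ∀ i j,
      fderiv ℝ (b j) z (eVec p n i) = -(if i = j then (1 : ℝ) else 0) := by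
  -- W i z = -(fderiv F z) (e i)
  have hWval : ∀ i z, W i z = -(fderiv ℝ F z (eVec p n i)) := by
    intro i z
    rw [hW i]
    simp [lieB]
  -- W i is smooth on U
  have hWs : ∀ i, ContDiffOn ℝ (⊤ : ℕ∞) (W i) U := by
    intro i
    have h1 : ContDiffOn ℝ (⊤ : ℕ∞) (fun z => fderiv ℝ F z) U :=
      hF.fderiv_of_isOpen hU (by simp)
    have h2 : ContDiffOn ℝ (⊤ : ℕ∞) (fun z => -(fderiv ℝ F z (eVec p n i))) U := by
      exact ((ContinuousLinearMap.apply ℝ _ (eVec p n i)).contDiff.comp_contDiffOn h1).neg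
    exact h2.congr (fun z _ => hWval i z)
  intro z hz i j
  have hzn : U ∈ nhds z := hU.mem_nhds hz
  have hda : ∀ k, DifferentiableAt ℝ (a k) z :=
    fun k => ((ha k).contDiffAt hzn).differentiableAt (by simp)
  have hdb : ∀ k, DifferentiableAt ℝ (b k) z :=
    fun k => ((hb k).contDiffAt hzn).differentiableAt (by simp)
  have hdW : ∀ k, DifferentiableAt ℝ (W k) z :=
    fun k => ((hWs k).contDiffAt hzn).differentiableAt (by simp)
  -- derivative of F equals derivative of the RHS
  have heq : F =ᶠ[nhds z] fun w => (∑ k, a k w • eVec p n k) + ∑ k, b k w • W k w :=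
    Filter.eventuallyEq_of_mem hzn hFab
  have hfd : fderiv ℝ F z =
      fderiv ℝ (fun w => (∑ k, a k w • eVec p n k) + ∑ k, b k w • W k w) z :=
    heq.fderiv_eq
  set e : Fin n → (Fin p → ℝ) × (Fin n → ℝ) := eVec p n with he
  -- compute fderiv of RHS applied to e i
  have hd1 : ∀ k, DifferentiableAt ℝ (fun w => a k w • e k) z :=
    fun k => (hda k).smul_const (e k)
  have hd2 : ∀ k, DifferentiableAt ℝ (fun w => b k w • W k w) z :=
    fun k => (hdb k).smul (hdW k)
  have hG : fderiv ℝ (fun w => (∑ k, a k w • e k) + ∑ k, b k w • W k w) z (e i)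
      = (∑ k, fderiv ℝ (a k) z (e i) • e k)
        + ∑ k, (fderiv ℝ (b k) z (e i) • W k z + b k z • fderiv ℝ (W k) z (e i)) := by
    rw [fderiv_fun_add (by exact DifferentiableAt.fun_sum fun k _ => hd1 k)
        (by exact DifferentiableAt.fun_sum fun k _ => hd2 k)]
    rw [fderiv_fun_sum (fun k _ => hd1 k), fderiv_fun_sum (fun k _ => hd2 k)]
    simp only [ContinuousLinearMap.add_apply, ContinuousLinearMap.coe_sum',
      Finset.sum_apply]
    congr 1
    · refine Finset.sum_congr rfl fun k _ => ?_
      rw [fderiv_smul_const (hda k)]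
      simp
    · refine Finset.sum_congr rfl fun k _ => ?_
      rw [fderiv_fun_smul (hdb k) (hdW k)]
      simp [add_comm]
  -- choose span coefficients
  have hc : ∀ k, ∃ c : Fin n → ℝ, ∑ l, c l • e l = fderiv ℝ (W k) z (e i) := by
    intro k
    have := hinv z hz i k
    have h2 : lieB (fun _ => e i) (W k) z = fderiv ℝ (W k) z (e i) := by
      simp [lieB]
    rw [h2] at this
    exact (Submodule.mem_span_range_iff_exists_fun ℝ).1 this
  choose c hcc using hc
  -- main linear relation
  have hmain : (∑ l, (fderiv ℝ (a l) z (e i) + ∑ k, b k z * c k l) • e l)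
      + ∑ k, ((if k = i then (1:ℝ) else 0) + fderiv ℝ (b k) z (e i)) • W k z = 0 := by
    have h0 : W i z + fderiv ℝ F z (e i) = 0 := by rw [hWval i z]; simp [he]
    rw [hfd, hG] at h0
    have hsw : ∑ k, b k z • fderiv ℝ (W k) z (e i)
        = ∑ l, (∑ k, b k z * c k l) • e l := by
      calc ∑ k, b k z • fderiv ℝ (W k) z (e i)
          = ∑ k, ∑ l, (b k z * c k l) • e l := Finset.sum_congr rfl fun k _ => by
            rw [← hcc k, Finset.smul_sum]
            exact Finset.sum_congr rfl fun l _ => smul_smul _ _ _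
        _ = ∑ l, ∑ k, (b k z * c k l) • e l := Finset.sum_comm
        _ = ∑ l, (∑ k, b k z * c k l) • e l := by
            exact Finset.sum_congr rfl fun l _ => (Finset.sum_smul).symm
    have hWi : W i z = ∑ k, (if k = i then (1:ℝ) else 0) • W k z := by simp
    rw [Finset.sum_add_distrib, hsw, hWi] at h0
    simp only [add_smul, Finset.sum_add_distrib]
    rw [← h0]
    abel
  -- conclude via linear independence
  have hli' := (Fintype.linearIndependent_iff.1 (hli z hz))
    (Sum.elim (fun l => fderiv ℝ (a l) z (e i) + ∑ k, b k z * c k l)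
      (fun k => (if k = i then (1:ℝ) else 0) + fderiv ℝ (b k) z (e i)))
  have hz0 := hli' (by
    rw [Fintype.sum_sum_type]
    simpa using hmain) (Sum.inr j)
  simp only [Sum.elim_inr] at hz0
  have : (if i = j then (1:ℝ) else 0) = (if j = i then (1:ℝ) else 0) := by
    by_cases h : i = j <;> simp [h, Ne.symm, eq_comm]
  rw [this]
  linarith
end

section
/- Let U ⊆ ℝ^m be open, let V_1, …, V_n and F be smooth vector fields on U, set W_i := [F, V_i], and assume: (a) the 2n vectors V_1(z), …, V_n(z), W_1(z), …, W_n(z) are linearly independent at every z ∈ U; (b) there are smooth functions c^k_{ij} : U → ℝ with [V_i, V_j] = c^k_{ij} V_k on U; (c) [V_i, W_j](z) ∈ 𝒲_z := span{V_1(z), …, V_n(z), W_1(z), …, W_n(z)} for all z ∈ U and all i, j. For z ∈ U let S_z : 𝒲_z → ℝ^m be the unique linear map with S_z(V_i(z)) = 0 and S_z(W_i(z)) = −V_i(z) for all i. Then for all z ∈ U and all i, j: [V_i, V_j](z) + S_z([V_i, W_j](z)) − S_z([V_j, W_i](z)) = 0. -/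
section aux
variable {E : Type*} [NormedAddCommGroup E] [NormedSpace ℝ E]

lemma fderiv_lieB_apply (X Y : E → E) (z v : E)
    (hX : ContDiffAt ℝ 2 X z) (hY : ContDiffAt ℝ 2 Y z) :
    fderiv ℝ (lieB X Y) z v
      = fderiv ℝ (fderiv ℝ Y) z v (X z) + fderiv ℝ Y z (fderiv ℝ X z v)
        - fderiv ℝ (fderiv ℝ X) z v (Y z) - fderiv ℝ X z (fderiv ℝ Y z v) := by
  have hX1 : DifferentiableAt ℝ X z := hX.differentiableAt two_ne_zero
  have hY1 : DifferentiableAt ℝ Y z := hY.differentiableAt two_ne_zero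
  have hX2 : DifferentiableAt ℝ (fderiv ℝ X) z :=
    (hX.fderiv_right (m := 1) le_rfl).differentiableAt one_ne_zero
  have hY2 : DifferentiableAt ℝ (fderiv ℝ Y) z :=
    (hY.fderiv_right (m := 1) le_rfl).differentiableAt one_ne_zero
  have d1 : DifferentiableAt ℝ (fun x => fderiv ℝ Y x (X x)) z := hY2.clm_apply hX1
  have d2 : DifferentiableAt ℝ (fun x => fderiv ℝ X x (Y x)) z := hX2.clm_apply hY1
  have : lieB X Y = fun x => fderiv ℝ Y x (X x) - fderiv ℝ X x (Y x) := rfl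
  rw [this, fderiv_fun_sub d1 d2, fderiv_clm_apply hY2 hX1, fderiv_clm_apply hX2 hY1]
  simp
  abel

lemma jacobi (X Y Z : E → E) (z : E)
    (hX : ContDiffAt ℝ 2 X z) (hY : ContDiffAt ℝ 2 Y z) (hZ : ContDiffAt ℝ 2 Z z) :
    lieB X (lieB Y Z) z + lieB Y (lieB Z X) z + lieB Z (lieB X Y) z = 0 := by
  have hXs := hX.isSymmSndFDerivAt (by simp)
  have hYs := hY.isSymmSndFDerivAt (by simp)
  have hZs := hZ.isSymmSndFDerivAt (by simp)
  have e1 := fderiv_lieB_apply Y Z z (X z) hY hZ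
  have e2 := fderiv_lieB_apply Z X z (Y z) hZ hX
  have e3 := fderiv_lieB_apply X Y z (Z z) hX hY
  show fderiv ℝ (lieB Y Z) z (X z) - fderiv ℝ X z (lieB Y Z z)
      + (fderiv ℝ (lieB Z X) z (Y z) - fderiv ℝ Y z (lieB Z X z))
      + (fderiv ℝ (lieB X Y) z (Z z) - fderiv ℝ Z z (lieB X Y z)) = 0
  rw [e1, e2, e3]
  show _ - fderiv ℝ X z (fderiv ℝ Z z (Y z) - fderiv ℝ Y z (Z z))
      + (_ - fderiv ℝ Y z (fderiv ℝ X z (Z z) - fderiv ℝ Z z (X z)))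
      + (_ - fderiv ℝ Z z (fderiv ℝ Y z (X z) - fderiv ℝ X z (Y z))) = 0
  simp only [map_sub]
  rw [hXs (Y z) (Z z), hYs (Z z) (X z), hZs (X z) (Y z)]
  abel

lemma lieB_neg_right (X g : E → E) (z : E) :
    lieB X (fun x => -(g x)) z = -(lieB X g z) := by
  simp only [lieB, fderiv_neg]
  simp
  abel

end aux

theorem stmt12 (m n : ℕ) (U : Set (Fin m → ℝ)) (hU : IsOpen U)
    (V : Fin n → (Fin m → ℝ) → Fin m → ℝ) (F : (Fin m → ℝ) → Fin m → ℝ)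
    (hVsm : ∀ i, ContDiffOn ℝ (⊤ : ℕ∞) (V i) U)
    (hF : ContDiffOn ℝ (⊤ : ℕ∞) F U)
    (hli : ∀ z ∈ U, LinearIndependent ℝ
      (Sum.elim (fun i => V i z) (fun i : Fin n => lieB F (V i) z)))
    -- `c i j k` stands for `c^k_{ij}`
    (c : Fin n → Fin n → Fin n → (Fin m → ℝ) → ℝ)
    (hc : ∀ i j k, ContDiffOn ℝ (⊤ : ℕ∞) (c i j k) U)
    (hVV : ∀ i j, ∀ z ∈ U, lieB (V i) (V j) z = ∑ k, c i j k z • V k z)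
    (hVW : ∀ i j, ∀ z ∈ U, lieB (V i) (lieB F (V j)) z ∈
      Submodule.span ℝ (Set.range (Sum.elim (fun k => V k z)
        (fun k : Fin n => lieB F (V k) z)))) :
    ∀ z, ∀ hz : z ∈ U, ∀ i j,
    ∀ S : ↥(Submodule.span ℝ (Set.range (Sum.elim (fun k => V k z)
          (fun k : Fin n => lieB F (V k) z)))) →ₗ[ℝ] (Fin m → ℝ),
      (∀ k, S ⟨V k z, Submodule.subset_span ⟨Sum.inl k, rfl⟩⟩ = 0) →
      (∀ k, S ⟨lieB F (V k) z, Submodule.subset_span ⟨Sum.inr k, rfl⟩⟩ = -(V k z)) →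
      lieB (V i) (V j) z
        + S ⟨lieB (V i) (lieB F (V j)) z, hVW i j z hz⟩
        - S ⟨lieB (V j) (lieB F (V i)) z, hVW j i z hz⟩ = 0 := by
  intro z hz i j S hSV hSW
  have h2 : (2 : WithTop ℕ∞) ≤ ((⊤ : ℕ∞) : WithTop ℕ∞) := by
    norm_cast
  have hV2 : ∀ k, ContDiffAt ℝ 2 (V k) z :=
    fun k => ((hVsm k).contDiffAt (hU.mem_nhds hz)).of_le h2
  have hF2 : ContDiffAt ℝ 2 F z := (hF.contDiffAt (hU.mem_nhds hz)).of_le h2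
  have hVd : ∀ k, DifferentiableAt ℝ (V k) z :=
    fun k => (hV2 k).differentiableAt two_ne_zero
  have hFd : DifferentiableAt ℝ F z := hF2.differentiableAt two_ne_zero
  have hcd : ∀ k, DifferentiableAt ℝ (c i j k) z := fun k =>
    (((hc i j k).contDiffAt (hU.mem_nhds hz)).of_le h2).differentiableAt two_ne_zero
  -- Step 1: Jacobi identity
  have hJ := jacobi (V i) F (V j) z (hV2 i) hF2 (hV2 j)
  have hA1 : lieB (V j) (V i) = fun x => -(lieB (V i) (V j) x) := by
    funext x; simp [lieB]
  have hA2 : lieB (V i) F = fun x => -(lieB F (V i) x) := by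
    funext x; simp [lieB]
  rw [hA1, hA2, lieB_neg_right, lieB_neg_right] at hJ
  have key1 : lieB (V i) (lieB F (V j)) z - lieB (V j) (lieB F (V i)) z
      = lieB F (lieB (V i) (V j)) z := by linear_combination (norm := abel) hJ
  -- Step 2: compute lieB F [V i, V j] at z
  have heq : lieB (V i) (V j) =ᶠ[nhds z] fun x => ∑ k, c i j k x • V k x := by
    filter_upwards [hU.mem_nhds hz] with x hx using hVV i j x hx
  have hdg : fderiv ℝ (lieB (V i) (V j)) z
      = ∑ k, (c i j k z • fderiv ℝ (V k) z
          + (fderiv ℝ (c i j k) z).smulRight (V k z)) := by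
    rw [heq.fderiv_eq, fderiv_fun_sum (A := fun k x => c i j k x • V k x) (fun k _ => (hcd k).smul (hVd k))]
    exact Finset.sum_congr rfl fun k _ => fderiv_smul (hcd k) (hVd k)
  have key2 : lieB F (lieB (V i) (V j)) z
      = ∑ k, (fderiv ℝ (c i j k) z (F z)) • V k z
        + ∑ k, c i j k z • lieB F (V k) z := by
    show fderiv ℝ (lieB (V i) (V j)) z (F z)
        - fderiv ℝ F z (lieB (V i) (V j) z) = _
    rw [hdg, hVV i j z hz, map_sum]
    simp only [ContinuousLinearMap.sum_apply, ContinuousLinearMap.add_apply,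
      ContinuousLinearMap.coe_smul', Pi.smul_apply,
      ContinuousLinearMap.smulRight_apply, map_smul, lieB, smul_sub,
      Finset.sum_add_distrib, Finset.sum_sub_distrib]
    abel
  -- Step 3: apply S
  have harg : ((⟨lieB (V i) (lieB F (V j)) z, hVW i j z hz⟩
        - ⟨lieB (V j) (lieB F (V i)) z, hVW j i z hz⟩ :
        Submodule.span ℝ (Set.range (Sum.elim (fun k => V k z)
          (fun k : Fin n => lieB F (V k) z)))))
      = ∑ k, (fderiv ℝ (c i j k) z (F z))
            • ⟨V k z, Submodule.subset_span ⟨Sum.inl k, rfl⟩⟩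
        + ∑ k, (c i j k z)
            • ⟨lieB F (V k) z, Submodule.subset_span ⟨Sum.inr k, rfl⟩⟩ := by
    apply Subtype.ext
    simp only [AddSubgroupClass.coe_sub, Submodule.coe_add,
      AddSubmonoidClass.coe_finset_sum, SetLike.val_smul]
    rw [key1, key2]
  have hS : S ⟨lieB (V i) (lieB F (V j)) z, hVW i j z hz⟩
      - S ⟨lieB (V j) (lieB F (V i)) z, hVW j i z hz⟩
      = -(lieB (V i) (V j) z) := by
    rw [← map_sub, harg, map_add, map_sum, map_sum]
    simp only [map_smul, hSV, hSW, smul_zero, Finset.sum_const_zero, zero_add,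
      smul_neg]
    rw [hVV i j z hz]
    exact Finset.sum_neg_distrib _
  rw [add_sub_assoc, hS, add_neg_cancel]
end

section
/- Identify ℝ^m with ℝ^{m−n} × ℝ^n and let e_1, …, e_n be the constant vector fields given by the standard basis vectors of the second factor. Let U ⊆ ℝ^m be open, let F be a smooth vector field on U, set W_i := [F, e_i], assume the 2n vectors e_1(z), …, e_n(z), W_1(z), …, W_n(z) are linearly independent at every z ∈ U, and let α^k_{ij}, β^k_{ij} : U → ℝ be smooth functions with [e_i, W_j] = α^k_{ij} e_k + β^k_{ij} W_k on U. Then both coefficient families are symmetric in their lower indices: α^k_{ij} = α^k_{ji} and β^k_{ij} = β^k_{ji} on U for all i, j, k. -/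
theorem stmt14 (p n : ℕ)
    (U : Set ((Fin p → ℝ) × (Fin n → ℝ))) (hU : IsOpen U)
    (F : ((Fin p → ℝ) × (Fin n → ℝ)) → (Fin p → ℝ) × (Fin n → ℝ))
    (hF : ContDiffOn ℝ (⊤ : ℕ∞) F U)
    (W : Fin n → ((Fin p → ℝ) × (Fin n → ℝ)) → (Fin p → ℝ) × (Fin n → ℝ))
    (hW : ∀ i, W i = lieB F (fun _ => eVec p n i))
    (hli : ∀ z ∈ U, LinearIndependent ℝ
      (Sum.elim (fun i : Fin n => eVec p n i) (fun i : Fin n => W i z)))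
    -- `α i j k` stands for `α^k_{ij}`, and `β i j k` for `β^k_{ij}`
    (α β : Fin n → Fin n → Fin n → ((Fin p → ℝ) × (Fin n → ℝ)) → ℝ)
    (hα : ∀ i j k, ContDiffOn ℝ (⊤ : ℕ∞) (α i j k) U)
    (hβ : ∀ i j k, ContDiffOn ℝ (⊤ : ℕ∞) (β i j k) U)
    (hrel : ∀ i j, ∀ z ∈ U,
      lieB (fun _ => eVec p n i) (W j) z =
        (∑ k, α i j k z • eVec p n k) + ∑ k, β i j k z • W k z) :
    ∀ i j k, ∀ z ∈ U, α i j k z = α j i k z ∧ β i j k z = β j i k z := by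
  -- W i = - DF(·)(e_i)
  have hWdef : ∀ i, W i = fun w => -(fderiv ℝ F w (eVec p n i)) := by
    intro i
    rw [hW]
    funext w
    simp [lieB]
  -- symmetry of the bracket [e_i, W j] on U
  have hsym : ∀ i j, ∀ z ∈ U,
      lieB (fun _ => eVec p n i) (W j) z = lieB (fun _ => eVec p n j) (W i) z := by
    intro i j z hz
    have hFz : ContDiffAt ℝ (⊤ : ℕ∞) F z := hF.contDiffAt (hU.mem_nhds hz)
    have hdf : DifferentiableAt ℝ (fderiv ℝ F) z := by
      have : ContDiffAt ℝ 1 (fderiv ℝ F) z :=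
        hFz.fderiv_right (WithTop.coe_le_coe.mpr le_top)
      exact this.differentiableAt one_ne_zero
    have key : ∀ a b : Fin n,
        fderiv ℝ (W a) z (eVec p n b) =
          -(fderiv ℝ (fderiv ℝ F) z (eVec p n b) (eVec p n a)) := by
      intro a b
      rw [hWdef a]
      have h1 : fderiv ℝ (fun w => -(fderiv ℝ F w (eVec p n a))) z =
          -(fderiv ℝ (fun w => fderiv ℝ F w (eVec p n a)) z) := by
        apply fderiv_fun_neg
      rw [h1]
      have h2 : fderiv ℝ (fun w => fderiv ℝ F w (eVec p n a)) z =
          (fderiv ℝ F z).comp (fderiv ℝ (fun _ => eVec p n a) z) +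
            (fderiv ℝ (fderiv ℝ F) z).flip (eVec p n a) :=
        fderiv_clm_apply hdf (differentiableAt_const _)
      simp [h2]
    have hsymm : ∀ v w, fderiv ℝ (fderiv ℝ F) z v w = fderiv ℝ (fderiv ℝ F) z w v :=
      hFz.isSymmSndFDerivAt (by rw [minSmoothness_of_isRCLikeNormedField]; exact WithTop.coe_le_coe.mpr (le_top : (2 : ℕ∞) ≤ ⊤))
    simp only [lieB, fderiv_fun_const, Pi.zero_apply, ContinuousLinearMap.zero_apply, sub_zero]
    rw [key j i, key i j, hsymm]
  intro i j k z hz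
  have h1 := hrel i j z hz
  have h2 := hrel j i z hz
  rw [hsym i j z hz] at h1
  have h3 : (∑ l, (α i j l z - α j i l z) • eVec p n l) +
      ∑ l, (β i j l z - β j i l z) • W l z = 0 := by
    have e := h1.symm.trans h2
    simp only [sub_smul, Finset.sum_sub_distrib]
    rw [sub_add_sub_comm, e, sub_self]
  have hli' := Fintype.linearIndependent_iff.mp (hli z hz)
  set g : Fin n ⊕ Fin n → ℝ :=
    Sum.elim (fun l => α i j l z - α j i l z) (fun l => β i j l z - β j i l z) with hg
  have hsum : ∑ x : Fin n ⊕ Fin n, g x •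
      (Sum.elim (fun i : Fin n => eVec p n i) (fun i : Fin n => W i z)) x = 0 := by
    rw [Fintype.sum_sum_type]
    simpa [hg] using h3
  have hzero := hli' g hsum
  constructor
  · have := hzero (Sum.inl k)
    simp [hg] at this
    linarith
  · have := hzero (Sum.inr k)
    simp [hg] at this
    linarith
end
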